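/- arXiv:2304.08596 — 7 statements merged into one kernel-verified Lean document; each statement's English description precedes it below -/
import Mathlib

section
/- The projection of SO(n) onto its strictly upper triangular entries equals the projection of O(n) onto its strictly upper triangular entries, which equals the projection of the operator norm unit ball onto its strictly upper triangular entries; in particular, all three images are convex. -/
open Matrix

/-- The special orthogonal group `SO(n)`. -/
def SpecialOrthogonal (n : ℕ) : Set (Matrix (Fin n) (Fin n) ℝ) :=
  {X | Xᵀ * X = 1 ∧ X.det = 1}

/-- The orthogonal group `O(n)`. -/
def OrthogonalGroup (n : ℕ) : Set (Matrix (Fin n) (Fin n) ℝ) :=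
  {X | Xᵀ * X = 1}

/-- The ℓ²→ℓ² operator norm of a real matrix. -/
noncomputable def opNorm {m p : ℕ} (M : Matrix (Fin m) (Fin p) ℝ) : ℝ :=
  ‖LinearMap.toContinuousLinearMap (Matrix.toEuclideanLin (𝕜 := ℝ) M)‖

/-- The operator norm unit ball in `ℝ^{n×n}`. -/
noncomputable def opNormBall (n : ℕ) : Set (Matrix (Fin n) (Fin n) ℝ) :=
  {X | opNorm X ≤ 1}

/-- The projection of a matrix onto its strictly upper triangular entries. -/
def sutProj {n : ℕ} (X : Matrix (Fin n) (Fin n) ℝ) :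
    {q : Fin n × Fin n // q.1 < q.2} → ℝ :=
  fun q => X q.1.1 q.1.2

open Module

local notation "⟪" x ", " y "⟫" => (inner ℝ x y : ℝ)

lemma exists_orthonormal_correction (m : ℕ) :
    ∀ (H : Type) [NormedAddCommGroup H] [InnerProductSpace ℝ H] [FiniteDimensional ℝ H]
      (γ : ℝ), 0 ≤ γ → γ ≤ 1 →
      ∀ (x : Fin m → H) (W : Fin m → Submodule ℝ H), Monotone W →
      (∀ i : Fin m, (i : ℕ) + 1 ≤ finrank ℝ (W i)) →
      (∀ v : H, ∑ i, (⟪x i, v⟫)^2 ≤ γ^2 * ‖v‖^2) →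
      ∃ y : Fin m → H, Orthonormal ℝ y ∧ ∀ i, y i - x i ∈ W i := by
  induction m with
  | zero =>
    intro H _ _ _ γ _ _ x W _ _ _
    exact ⟨fun i => i.elim0, ⟨fun i => i.elim0, fun i => i.elim0⟩, fun i => i.elim0⟩
  | succ m ih =>
    intro H _ _ _ γ hγ0 hγ1 x W hW hdim hx
    obtain ⟨w0, hw0mem, hw0ne⟩ : ∃ v ∈ W 0, v ≠ 0 := by
      by_contra h
      push_neg at h
      have hbot : W 0 = ⊥ := by
        rw [Submodule.eq_bot_iff]; exact h
      have := hdim 0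
      rw [hbot] at this
      simp [finrank_bot] at this
    obtain ⟨w, hwdef⟩ : ∃ w : H, w = (‖w0‖ : ℝ)⁻¹ • w0 := ⟨_, rfl⟩
    have hwmem : w ∈ W 0 := hwdef ▸ Submodule.smul_mem _ _ hw0mem
    have hwnorm : ‖w‖ = 1 := hwdef ▸ norm_smul_inv_norm hw0ne
    have hww : ⟪w, w⟫ = 1 := by
      rw [real_inner_self_eq_norm_sq, hwnorm]; norm_num
    obtain ⟨x0, hx0def⟩ : ∃ x0 : H, x0 = x 0 := ⟨_, rfl⟩
    have hx0 : ‖x0‖^2 ≤ γ^2 := by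
      have h1 := hx x0
      have h2 : (⟪x 0, x0⟫)^2 ≤ ∑ i, (⟪x i, x0⟫)^2 :=
        Finset.single_le_sum (f := fun i : Fin (m+1) => (⟪x i, x0⟫)^2)
          (fun i _ => sq_nonneg _) (Finset.mem_univ (0 : Fin (m+1)))
      rw [← hx0def, real_inner_self_eq_norm_sq] at h2
      nlinarith [sq_nonneg (‖x0‖), norm_nonneg x0, sq_nonneg (‖x0‖^2 - γ^2)]
    have hγ2 : γ^2 ≤ 1 := by nlinarith
    have hx0le1 : ‖x0‖^2 ≤ 1 := hx0.trans hγ2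
    obtain ⟨c, hcdef⟩ : ∃ c : ℝ, c = ⟪x0, w⟫ := ⟨_, rfl⟩
    have hc2 : c^2 ≤ ‖x0‖^2 := by
      have h := abs_real_inner_le_norm x0 w
      rw [hwnorm, mul_one] at h
      rw [← sq_abs c, ← sq_abs ‖x0‖]
      have h0 : |c| ≤ |‖x0‖| := by
        rw [abs_of_nonneg (norm_nonneg _), hcdef]; exact h
      exact pow_le_pow_left₀ (abs_nonneg _) h0 2
    obtain ⟨D, hDdef⟩ : ∃ D : ℝ, D = c^2 + 1 - ‖x0‖^2 := ⟨_, rfl⟩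
    have hD0 : 0 ≤ D := by nlinarith
    obtain ⟨g, hgdef⟩ : ∃ g : ℝ, g = Real.sqrt D := ⟨_, rfl⟩
    have hg0 : 0 ≤ g := hgdef ▸ Real.sqrt_nonneg _
    have hg2 : g^2 = D := hgdef ▸ Real.sq_sqrt hD0
    obtain ⟨τ, hτdef⟩ : ∃ τ : ℝ, τ = -c + g := ⟨_, rfl⟩
    obtain ⟨y0, hy0def⟩ : ∃ y0 : H, y0 = x0 + τ • w := ⟨_, rfl⟩
    have hy0w : ⟪y0, w⟫ = g := by
      rw [hy0def, inner_add_left, real_inner_smul_left, hww, ← hcdef, hτdef]; ring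
    have hwy0 : ⟪w, y0⟫ = g := by rw [real_inner_comm]; exact hy0w
    have hy0norm2 : ‖y0‖^2 = 1 := by
      have h : ‖y0‖^2 = ‖x0‖^2 + 2*(τ*c) + τ^2 := by
        rw [hy0def, norm_add_sq_real, real_inner_smul_right, ← hcdef, norm_smul,
          hwnorm, mul_one, Real.norm_eq_abs, sq_abs]
      rw [h, hτdef]
      nlinarith [hg2]
    have hy0norm : ‖y0‖ = 1 := by
      rw [← Real.sqrt_sq (norm_nonneg y0), hy0norm2, Real.sqrt_one]
    have hy0y0 : ⟪y0, y0⟫ = 1 := by rw [real_inner_self_eq_norm_sq, hy0norm2]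
    have hx0e : x0 = y0 - τ • w := by rw [hy0def]; abel
    have hx0y0 : ⟪x0, y0⟫ = 1 - τ * g := by
      rw [hx0e, inner_sub_left, real_inner_smul_left, hy0y0, hwy0]
    have hgτ : g = 0 → τ = 0 ∧ ‖x0‖^2 = 1 := by
      intro hg
      have hDz : D = 0 := by rw [← hg2, hg]; ring
      have hc20 : c^2 ≤ 0 := by nlinarith
      have hc0 : c = 0 := by
        have : c^2 = 0 := le_antisymm hc20 (sq_nonneg c)
        exact sq_eq_zero_iff.mp this
      refine ⟨by rw [hτdef, hc0, hg]; ring, ?_⟩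
      rw [hDdef, hc0] at hDz
      norm_num at hDz
      linarith
    have hdeg : g = 0 → ∀ i : Fin m, ⟪x i.succ, y0⟫ = 0 := by
      intro hg i
      obtain ⟨hτ0, hx01⟩ := hgτ hg
      have hy0x0 : y0 = x0 := by rw [hy0def, hτ0, zero_smul, add_zero]
      have h1 := hx x0
      rw [Fin.sum_univ_succ] at h1
      have h0 : ⟪x 0, x0⟫ = 1 := by
        rw [← hx0def, real_inner_self_eq_norm_sq, hx01]
      have hsum0 : ∑ j : Fin m, (⟪x j.succ, x0⟫)^2 ≤ 0 := by
        have hb : γ^2 * ‖x0‖^2 ≤ 1 := by rw [hx01, mul_one]; exact hγ2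
        rw [h0] at h1
        norm_num at h1
        linarith
      have heq : ∑ j : Fin m, (⟪x j.succ, x0⟫)^2 = 0 :=
        le_antisymm hsum0 (Finset.sum_nonneg fun j _ => sq_nonneg _)
      have hz := (Finset.sum_eq_zero_iff_of_nonneg (fun j _ => sq_nonneg _)).mp heq i (Finset.mem_univ i)
      have hinner : ⟪x i.succ, x0⟫ = 0 := sq_eq_zero_iff.mp hz
      rw [hy0x0]; exact hinner
    -- the orthogonal complement of y0
    obtain ⟨K, hKdef⟩ : ∃ K : Submodule ℝ H, K = (Submodule.span ℝ {y0})ᗮ := ⟨_, rfl⟩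
    have hmemK : ∀ z : H, z ∈ K ↔ ⟪y0, z⟫ = 0 := by
      intro z; rw [hKdef]
      exact Submodule.mem_orthogonal_singleton_iff_inner_right
    obtain ⟨q, hqdef⟩ : ∃ q : Fin m → ℝ, ∀ i, q i = ⟪x i.succ, y0⟫ / g :=
      ⟨fun i => ⟪x i.succ, y0⟫ / g, fun i => rfl⟩
    have hqg : ∀ i : Fin m, ⟪x i.succ, y0⟫ - q i * g = 0 := by
      intro i
      rcases eq_or_ne g 0 with hg | hg
      · rw [hg, mul_zero, sub_zero]; exact hdeg hg i
      · rw [hqdef i, div_mul_cancel₀ _ hg, sub_self]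
    obtain ⟨x'full, hx'fulldef⟩ : ∃ z : Fin m → H, ∀ i, z i = x i.succ - q i • w :=
      ⟨fun i => x i.succ - q i • w, fun i => rfl⟩
    have hx'K : ∀ i, x'full i ∈ K := by
      intro i
      rw [hmemK]
      rw [hx'fulldef i, inner_sub_right, real_inner_smul_right, hy0w, real_inner_comm]
      exact hqg i
    obtain ⟨x', hx'def⟩ : ∃ x' : Fin m → K, ∀ i, (x' i : H) = x'full i :=
      ⟨fun i => ⟨x'full i, hx'K i⟩, fun i => rfl⟩
    obtain ⟨W', hW'def⟩ : ∃ W' : Fin m → Submodule ℝ K,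
        ∀ i, W' i = (W i.succ).comap K.subtype := ⟨_, fun i => rfl⟩
    have hW' : Monotone W' := by
      intro a b hab
      rw [hW'def a, hW'def b]
      exact Submodule.comap_mono (hW (Fin.succ_le_succ_iff.mpr hab))
    have hdim' : ∀ i : Fin m, (i : ℕ) + 1 ≤ finrank ℝ (W' i) := by
      intro i
      have hU : (i : ℕ) + 2 ≤ finrank ℝ (W i.succ) := by
        have := hdim i.succ
        rwa [Fin.val_succ] at this
      set U := W i.succ with hUdef
      obtain ⟨f, hf⟩ : ∃ f : U →ₗ[ℝ] ℝ, ∀ u : U, f u = ⟪y0, (u : H)⟫ :=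
        ⟨((innerSL ℝ y0) : H →ₗ[ℝ] ℝ).comp U.subtype, fun u => by simp⟩
      have hrange : finrank ℝ (LinearMap.range f) ≤ 1 := by
        have h := Submodule.finrank_le (LinearMap.range f)
        simpa using h
      have hrk := LinearMap.finrank_range_add_finrank_ker f
      have hker : (i : ℕ) + 1 ≤ finrank ℝ (LinearMap.ker f) := by omega
      have hfzero : ∀ u : LinearMap.ker f, ⟪y0, ((u : U) : H)⟫ = 0 := by
        intro u
        rw [← hf]
        exact LinearMap.mem_ker.mp u.2
      set φ : (LinearMap.ker f) →ₗ[ℝ] (W' i) :=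
        { toFun := fun u => ⟨⟨((u : U) : H), (hmemK _).mpr (hfzero u)⟩,
            by rw [hW'def i]; exact Submodule.mem_comap.mpr (u : U).2⟩,
          map_add' := fun u v => by ext; rfl,
          map_smul' := fun a u => by ext; rfl } with hφdef
      have hφinj : Function.Injective φ := by
        intro u v huv
        have : ((u : U) : H) = ((v : U) : H) := by
          have := congrArg (fun z : W' i => ((z : K) : H)) huv
          simpa [hφdef] using this
        exact Subtype.ext (Subtype.ext this)
      have := LinearMap.finrank_le_finrank_of_injective hφinj
      omega
    have hx' : ∀ v : K, ∑ i : Fin m, (⟪x' i, v⟫)^2 ≤ γ^2 * ‖v‖^2 := by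
      intro v
      have hvy0 : ⟪y0, (v : H)⟫ = 0 := (hmemK _).mp v.2
      have hvy0' : ⟪(v : H), y0⟫ = 0 := by rw [real_inner_comm]; exact hvy0
      obtain ⟨s, hsdef⟩ : ∃ s : ℝ, s = ⟪w, (v : H)⟫ / g := ⟨_, rfl⟩
      obtain ⟨v', hv'def⟩ : ∃ v' : H, v' = (v : H) - s • y0 := ⟨_, rfl⟩
      have hτs : τ * ⟪w, (v : H)⟫ = τ * (s * g) := by
        rcases eq_or_ne g 0 with hg | hg
        · obtain ⟨hτ0, _⟩ := hgτ hg; rw [hτ0]; ring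
        · rw [hsdef, div_mul_cancel₀ _ hg]
      have hqs : ∀ i : Fin m, q i * ⟪w, (v : H)⟫ = s * ⟪x i.succ, y0⟫ := by
        intro i
        rcases eq_or_ne g 0 with hg | hg
        · rw [hqdef i, hsdef, hg, div_zero, div_zero, zero_mul, zero_mul]
        · rw [hqdef i, hsdef]; field_simp
      have hkey : ∀ i : Fin m, ⟪x' i, v⟫ = ⟪x i.succ, v'⟫ := by
        intro i
        rw [Submodule.coe_inner, hx'def i, hx'fulldef i, hv'def,
          inner_sub_left, inner_sub_right, real_inner_smul_left, real_inner_smul_right,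
          hqs i]
      have hx0v : ⟪x0, (v : H)⟫ = -(τ * ⟪w, (v : H)⟫) := by
        rw [hx0e, inner_sub_left, real_inner_smul_left, hvy0]
        ring
      have hx0v' : ⟪x 0, v'⟫ = -s := by
        rw [← hx0def, hv'def, inner_sub_right, real_inner_smul_right, hx0y0, hx0v, hτs]
        ring
      have hnv' : ‖v'‖^2 = ‖(v : H)‖^2 + s^2 := by
        rw [hv'def, norm_sub_sq_real, real_inner_smul_right, hvy0', norm_smul,
          Real.norm_eq_abs, hy0norm, mul_pow, sq_abs]
        ring
      have hsum := hx v'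
      rw [Fin.sum_univ_succ, hx0v', hnv'] at hsum
      have hkeysum : ∑ i : Fin m, (⟪x' i, v⟫)^2 = ∑ i : Fin m, (⟪x i.succ, v'⟫)^2 :=
        Finset.sum_congr rfl fun i _ => by rw [hkey i]
      have hvnorm : ‖v‖ = ‖(v : H)‖ := Submodule.coe_norm v
      rw [hkeysum, hvnorm]
      have hh : (0:ℝ) ≤ (1 - γ^2) * s^2 := mul_nonneg (by linarith) (sq_nonneg s)
      have hs2 : (-s)^2 = s^2 := by ring
      rw [hs2] at hsum
      linarith [hsum, hh]
    obtain ⟨y', hy'on, hy'mem⟩ := ih K γ hγ0 hγ1 x' W' hW' hdim' hx'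
    refine ⟨Fin.cases y0 (fun i => ((y' i : K) : H)), ?_, ?_⟩
    · rw [orthonormal_iff_ite]
      intro i j
      induction i using Fin.cases with
      | zero =>
        induction j using Fin.cases with
        | zero => simpa using hy0y0
        | succ b =>
          have hb : ⟪y0, ((y' b : K) : H)⟫ = 0 := (hmemK _).mp (y' b).2
          simpa [(Fin.succ_ne_zero b).symm] using hb
      | succ a =>
        induction j using Fin.cases with
        | zero =>
          have hb : ⟪((y' a : K) : H), y0⟫ = 0 := by
            rw [real_inner_comm]; exact (hmemK _).mp (y' a).2
          simpa [Fin.succ_ne_zero a] using hb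
        | succ b =>
          have hab := (orthonormal_iff_ite.mp hy'on) a b
          rw [Submodule.coe_inner] at hab
          simpa [Fin.succ_inj] using hab
    · intro i
      induction i using Fin.cases with
      | zero =>
        simp only [Fin.cases_zero]
        rw [← hx0def, hy0def, add_sub_cancel_left]
        exact Submodule.smul_mem _ _ hwmem
      | succ i =>
        simp only [Fin.cases_succ]
        have hm := hy'mem i
        rw [hW'def i] at hm
        have hm2 : ((y' i - x' i : K) : H) ∈ W i.succ := Submodule.mem_comap.mp hm
        have hco : ((y' i - x' i : K) : H) = ((y' i : K) : H) - x'full i := by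
          rw [AddSubgroupClass.coe_sub, hx'def i]
        rw [hco] at hm2
        have hsplit : ((y' i : K) : H) - x i.succ
            = (((y' i : K) : H) - x'full i) + ((-(q i)) • w) := by
          rw [hx'fulldef i, neg_smul]; abel
        rw [hsplit]
        exact Submodule.add_mem _ hm2
          (Submodule.smul_mem _ _ (hW (Fin.zero_le i.succ) hwmem))

lemma exists_orthogonal_same_sut (n : ℕ) (X : Matrix (Fin n) (Fin n) ℝ)
    (hX : opNorm X ≤ 1) :
    ∃ Y : Matrix (Fin n) (Fin n) ℝ, Yᵀ * Y = 1 ∧ sutProj Y = sutProj X := by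
  classical
  set H := EuclideanSpace ℝ (Fin n) with hHdef
  have hinner : ∀ (u : Fin n → ℝ) (v : H),
      ⟪(WithLp.equiv 2 (Fin n → ℝ)).symm u, v⟫ = ∑ j, u j * v j := by
    intro u v
    rw [PiLp.inner_apply]
    refine Finset.sum_congr rfl fun j _ => ?_
    rw [WithLp.equiv_symm_apply, PiLp.toLp_apply]
    simp [RCLike.inner_apply, mul_comm]
  have hnorm2 : ∀ v : H, ‖v‖^2 = ∑ j, (v j)^2 := by
    intro v
    rw [EuclideanSpace.norm_eq, Real.sq_sqrt (Finset.sum_nonneg fun j _ => sq_nonneg _)]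
    refine Finset.sum_congr rfl fun j _ => ?_
    rw [Real.norm_eq_abs, sq_abs]
  set x : Fin n → H := fun i => (WithLp.equiv 2 (Fin n → ℝ)).symm (X i) with hxdef
  set W : Fin n → Submodule ℝ H := fun i =>
    { carrier := {v : H | ∀ j, i < j → v j = 0},
      add_mem' := by
        intro a b ha hb j hj
        have : (a + b) j = a j + b j := rfl
        rw [this, ha j hj, hb j hj, add_zero]
      zero_mem' := fun j hj => rfl
      smul_mem' := by
        intro r a ha j hj
        have : (r • a) j = r * a j := rfl
        rw [this, ha j hj, mul_zero] } with hWdef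
  have hWmem : ∀ (i : Fin n) (v : H), v ∈ W i ↔ ∀ j, i < j → v j = 0 := by
    intro i v; rfl
  have hWmono : Monotone W := by
    intro a b hab v hv j hj
    exact hv j (lt_of_le_of_lt hab hj)
  have hWdim : ∀ i : Fin n, (i : ℕ) + 1 ≤ finrank ℝ (W i) := by
    intro i
    set emb : Fin ((i : ℕ) + 1) → Fin n := fun k => ⟨k.1, lt_of_le_of_lt (Nat.lt_succ_iff.mp k.2) i.2⟩ with hembdef
    have hembinj : Function.Injective emb := by
      intro a b hab
      have := congrArg Fin.val hab
      exact Fin.ext this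
    have hmem : ∀ k, EuclideanSpace.single (emb k) (1:ℝ) ∈ W i := by
      intro k j hj
      rw [EuclideanSpace.single_apply, if_neg]
      intro hje
      rw [hje] at hj
      have : (emb k : Fin n) ≤ i := by
        rw [Fin.le_def]
        exact Nat.lt_succ_iff.mp k.2
      exact absurd hj (not_lt.mpr this)
    set F : Fin ((i : ℕ) + 1) → W i := fun k => ⟨EuclideanSpace.single (emb k) 1, hmem k⟩ with hFdef
    have hli : LinearIndependent ℝ F := by
      apply LinearIndependent.of_comp (W i).subtype
      have h1 : ((W i).subtype ∘ F) = (fun j => EuclideanSpace.single j (1:ℝ)) ∘ emb := by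
        funext k; rfl
      rw [h1]
      have h2 : (fun j : Fin n => EuclideanSpace.single j (1:ℝ))
          = ⇑(EuclideanSpace.basisFun (Fin n) ℝ) := by
        funext j
        rw [EuclideanSpace.basisFun_apply]
      rw [h2]
      exact ((EuclideanSpace.basisFun (Fin n) ℝ).orthonormal.linearIndependent).comp emb hembinj
    have := hli.fintype_card_le_finrank
    simpa using this
  set T := LinearMap.toContinuousLinearMap (Matrix.toEuclideanLin (𝕜 := ℝ) X) with hTdef
  have hTv : ∀ (v : H) (i : Fin n), T v i = ∑ j, X i j * v j := by
    intro v i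
    rw [hTdef, LinearMap.coe_toContinuousLinearMap', Matrix.toEuclideanLin_apply,
      PiLp.toLp_apply]
    simp [Matrix.mulVec, dotProduct]
  have hcontr : ∀ v : H, ∑ i, (⟪x i, v⟫)^2 ≤ (opNorm X)^2 * ‖v‖^2 := by
    intro v
    have h1 : ‖T v‖ ≤ opNorm X * ‖v‖ := T.le_opNorm v
    have h2 : ∑ i, (⟪x i, v⟫)^2 = ‖T v‖^2 := by
      rw [hnorm2 (T v)]
      refine Finset.sum_congr rfl fun i _ => ?_
      rw [hxdef, hinner, hTv]
    rw [h2]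
    calc ‖T v‖^2 ≤ (opNorm X * ‖v‖)^2 :=
          pow_le_pow_left₀ (norm_nonneg _) h1 2
      _ = (opNorm X)^2 * ‖v‖^2 := by ring
  obtain ⟨y, hyon, hymem⟩ := exists_orthonormal_correction n H (opNorm X)
    (norm_nonneg _) hX x W hWmono hWdim hcontr
  set Y : Matrix (Fin n) (Fin n) ℝ := Matrix.of (fun i j => y i j) with hYdef
  have hYY : Y * Yᵀ = 1 := by
    ext i k
    rw [Matrix.mul_apply, Matrix.one_apply]
    have h1 : ∑ j, Y i j * Yᵀ j k = ⟪y i, y k⟫ := by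
      rw [PiLp.inner_apply]
      refine Finset.sum_congr rfl fun j _ => ?_
      simp [hYdef, RCLike.inner_apply, mul_comm]
    rw [h1, orthonormal_iff_ite.mp hyon i k]
  refine ⟨Y, mul_eq_one_comm.mp hYY, ?_⟩
  funext q
  obtain ⟨⟨i, j⟩, hij⟩ := q
  have h1 : (y i - x i) j = 0 := hymem i j hij
  have h2 : (y i - x i) j = y i j - x i j := rfl
  have h3 : x i j = X i j := rfl
  show Y i j = X i j
  rw [hYdef]
  show y i j = X i j
  rw [← h3]
  have := h2 ▸ h1
  linarith [this]

lemma euclid_norm_sq {n : ℕ} (v : EuclideanSpace ℝ (Fin n)) : ‖v‖^2 = ∑ j, (v j)^2 := by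
  rw [EuclideanSpace.norm_eq, Real.sq_sqrt (Finset.sum_nonneg fun j _ => sq_nonneg _)]
  exact Finset.sum_congr rfl fun j _ => by rw [Real.norm_eq_abs, sq_abs]

lemma toEuc_apply {m n : ℕ} (X : Matrix (Fin m) (Fin n) ℝ) (v : EuclideanSpace ℝ (Fin n))
    (i : Fin m) :
    (LinearMap.toContinuousLinearMap (Matrix.toEuclideanLin (𝕜 := ℝ) X)) v i
      = ∑ j, X i j * v j := by
  rw [LinearMap.coe_toContinuousLinearMap', Matrix.toEuclideanLin_apply,
    PiLp.toLp_apply]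
  simp [Matrix.mulVec, dotProduct]

lemma orth_opNorm_le {n : ℕ} (X : Matrix (Fin n) (Fin n) ℝ) (hX : Xᵀ * X = 1) :
    opNorm X ≤ 1 := by
  apply ContinuousLinearMap.opNorm_le_bound _ zero_le_one
  intro v
  rw [one_mul]
  set T := LinearMap.toContinuousLinearMap (Matrix.toEuclideanLin (𝕜 := ℝ) X) with hT
  set u : Fin n → ℝ := fun j => v j with hu
  have h1 : ‖T v‖^2 = (X *ᵥ u) ⬝ᵥ (X *ᵥ u) := by
    rw [euclid_norm_sq (T v)]
    rw [dotProduct]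
    refine Finset.sum_congr rfl fun i _ => ?_
    rw [toEuc_apply X v i]
    have : (X *ᵥ u) i = ∑ j, X i j * u j := by
      simp [Matrix.mulVec, dotProduct]
    rw [this, sq]
  have h2 : (X *ᵥ u) ⬝ᵥ (X *ᵥ u) = u ⬝ᵥ u := by
    rw [dotProduct_mulVec]
    have h3 : (X *ᵥ u) ᵥ* X = (Xᵀ * X) *ᵥ u := by
      rw [← mulVec_mulVec, mulVec_transpose]
    rw [h3, hX, one_mulVec]
  have h4 : u ⬝ᵥ u = ‖v‖^2 := by
    rw [euclid_norm_sq v, dotProduct]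
    exact Finset.sum_congr rfl fun j _ => (sq (u j)).symm ▸ rfl
  have h5 : ‖T v‖^2 = ‖v‖^2 := by rw [h1, h2, h4]
  have h6 := congrArg Real.sqrt h5
  rw [Real.sqrt_sq (norm_nonneg _), Real.sqrt_sq (norm_nonneg _)] at h6
  exact le_of_eq h6

lemma opNorm_add_le {n : ℕ} (A B : Matrix (Fin n) (Fin n) ℝ) :
    opNorm (A + B) ≤ opNorm A + opNorm B := by
  unfold opNorm
  rw [map_add, map_add]
  exact norm_add_le _ _

lemma opNorm_smul {n : ℕ} (a : ℝ) (A : Matrix (Fin n) (Fin n) ℝ) :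
    opNorm (a • A) = |a| * opNorm A := by
  unfold opNorm
  rw [_root_.map_smul, _root_.map_smul]
  rw [← Real.norm_eq_abs]
  exact norm_smul a (LinearMap.toContinuousLinearMap (Matrix.toEuclideanLin (𝕜 := ℝ) A))

lemma sutProj_linear {n : ℕ} (a b : ℝ) (A B : Matrix (Fin n) (Fin n) ℝ) :
    sutProj (a • A + b • B) = a • sutProj A + b • sutProj B := by
  funext q
  simp [sutProj, Matrix.add_apply, Matrix.smul_apply, smul_eq_mul]

lemma ball_convex (n : ℕ) : Convex ℝ (opNormBall n) := by
  intro A hA B hB a b ha hb hab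
  have h1 : opNorm (a • A + b • B) ≤ a * opNorm A + b * opNorm B := by
    calc opNorm (a • A + b • B) ≤ opNorm (a • A) + opNorm (b • B) := opNorm_add_le _ _
      _ = a * opNorm A + b * opNorm B := by
          rw [opNorm_smul, opNorm_smul, abs_of_nonneg ha, abs_of_nonneg hb]
  have hA1 : opNorm A ≤ 1 := hA
  have hB1 : opNorm B ≤ 1 := hB
  show opNorm (a • A + b • B) ≤ 1
  calc opNorm (a • A + b • B) ≤ a * opNorm A + b * opNorm B := h1
    _ ≤ a * 1 + b * 1 := by
        gcongr
    _ = 1 := by rw [mul_one, mul_one, hab]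

/-- The projections of `SO(n)`, `O(n)` and the operator norm ball onto the
strictly upper triangular entries coincide; in particular all three are convex. -/
theorem sut_projections_eq_and_convex (n : ℕ) :
    sutProj '' SpecialOrthogonal n = sutProj '' OrthogonalGroup n ∧
    sutProj '' OrthogonalGroup n = sutProj '' opNormBall n ∧
    Convex ℝ (sutProj '' SpecialOrthogonal n) ∧
    Convex ℝ (sutProj '' OrthogonalGroup n) ∧
    Convex ℝ (sutProj '' opNormBall n) := by
  have hOB : sutProj '' OrthogonalGroup n = sutProj '' opNormBall n := by
    apply Set.Subset.antisymm
    · exact Set.image_mono (fun X hX => orth_opNorm_le X hX)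
    · rintro s ⟨X, hX, rfl⟩
      obtain ⟨Y, hY, hYs⟩ := exists_orthogonal_same_sut n X hX
      exact ⟨Y, hY, hYs⟩
  have hSO : sutProj '' SpecialOrthogonal n = sutProj '' OrthogonalGroup n := by
    apply Set.Subset.antisymm
    · exact Set.image_mono (fun X hX => hX.1)
    · rintro s ⟨X, hX, rfl⟩
      rcases eq_or_ne (X.det) 1 with hdet | hdet
      · exact ⟨X, ⟨hX, hdet⟩, rfl⟩
      · have hdet2 : X.det * X.det = 1 := by
          have := congrArg Matrix.det hX
          rwa [Matrix.det_mul, Matrix.det_transpose, Matrix.det_one] at this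
        have hdetm : X.det = -1 := by
          rcases mul_self_eq_one_iff.mp hdet2 with h | h
          · exact absurd h hdet
          · exact h
        cases n with
        | zero =>
          exact absurd (Matrix.det_isEmpty (A := X)) hdet
        | succ m =>
          set d : Fin (m+1) → ℝ := fun i => if i = Fin.last m then -1 else 1 with hd
          set D := Matrix.diagonal d with hD
          have hdetD : D.det = -1 := by
            rw [hD, Matrix.det_diagonal, hd]
            rw [Finset.prod_ite_eq' Finset.univ (Fin.last m) (fun _ => (-1 : ℝ))]
            simp
          refine ⟨D * X, ⟨?_, ?_⟩, ?_⟩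
          · have hDD : Dᵀ * D = 1 := by
              rw [hD, Matrix.diagonal_transpose, Matrix.diagonal_mul_diagonal]
              have : (fun i => d i * d i) = fun _ => (1:ℝ) := by
                funext i
                rw [hd]
                by_cases h : i = Fin.last m <;> simp [h]
              rw [this, Matrix.diagonal_one]
            rw [Matrix.transpose_mul, Matrix.mul_assoc, ← Matrix.mul_assoc Dᵀ D X, hDD,
              Matrix.one_mul, hX]
          · rw [Matrix.det_mul, hdetD, hdetm]; norm_num
          · funext q
            obtain ⟨⟨i, j⟩, hij⟩ := q
            show (D * X) i j = X i j
            rw [hD, Matrix.diagonal_mul]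
            simp only [hd]
            have hine : i ≠ Fin.last m := by
              intro h
              have : j ≤ Fin.last m := Fin.le_last j
              rw [← h] at this
              exact absurd hij (not_lt.mpr this)
            rw [if_neg hine, one_mul]
  have hCball : Convex ℝ (sutProj '' opNormBall n) := by
    intro s1 hs1 s2 hs2 a b ha hb hab
    obtain ⟨X1, hX1, rfl⟩ := hs1
    obtain ⟨X2, hX2, rfl⟩ := hs2
    refine ⟨a • X1 + b • X2, ball_convex n hX1 hX2 ha hb hab, ?_⟩
    rw [sutProj_linear]
  exact ⟨hSO, hOB, by rw [hSO, hOB]; exact hCball, by rw [hOB]; exact hCball, hCball⟩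
end

section
/- The parity polytope PP_n equals the set of x ∈ [−1,1]^n such that for every subset S ⊆ [n] of odd cardinality, ⟨x, 1_n − 2·1_S⟩ ≤ n − 2. -/
open Finset

namespace ParityPolytopeAux

variable {n : ℕ}

noncomputable def pc (S : Finset (Fin n)) (i : Fin n) : ℝ := if i ∈ S then -1 else 1

noncomputable def pf (S : Finset (Fin n)) (x : Fin n → ℝ) : ℝ := ∑ i, x i * pc S i

def Kset (n : ℕ) : Set (Fin n → ℝ) :=
  {x | (∀ i, x i ∈ Set.Icc (-1 : ℝ) 1) ∧
    ∀ S : Finset (Fin n), Odd S.card → pf S x ≤ (n : ℝ) - 2}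

def Vset (n : ℕ) : Set (Fin n → ℝ) := {x | (∀ i, x i = 1 ∨ x i = -1) ∧ ∏ i, x i = 1}

lemma pc_cases (S : Finset (Fin n)) (i : Fin n) : pc S i = -1 ∨ pc S i = 1 := by
  unfold pc; split <;> simp

lemma Vset_subset_Kset : Vset n ⊆ Kset n := by
  rintro v ⟨hv, hprod⟩
  constructor
  · intro i; rcases hv i with h | h <;> rw [h] <;> norm_num
  · intro S hS
    have ht1 : ∀ i, v i * pc S i = 1 ∨ v i * pc S i = -1 := by
      intro i; rcases hv i with h | h <;> rcases pc_cases S i with h' | h' <;>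
        rw [h, h'] <;> norm_num
    have htp : ∏ i, (v i * pc S i) = -1 := by
      rw [Finset.prod_mul_distrib, hprod, one_mul]
      have h1 : ∏ i, pc S i = (-1 : ℝ) ^ S.card := by
        unfold pc
        rw [Finset.prod_ite_mem, Finset.univ_inter, Finset.prod_const]
      rw [h1, hS.neg_one_pow]
    obtain ⟨j, hj⟩ : ∃ j, v j * pc S j = -1 := by
      by_contra hc
      push_neg at hc
      have h2 : ∀ i ∈ Finset.univ, v i * pc S i = 1 :=
        fun i _ => (ht1 i).resolve_right (hc i)
      rw [Finset.prod_congr rfl h2, Finset.prod_const_one] at htp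
      norm_num at htp
    have hn : 1 ≤ n := j.pos
    have hsplit : pf S v = v j * pc S j + ∑ i ∈ Finset.univ.erase j, (v i * pc S i) :=
      (Finset.add_sum_erase _ _ (Finset.mem_univ j)).symm
    have hbound : ∑ i ∈ Finset.univ.erase j, (v i * pc S i) ≤ ((n : ℝ) - 1) := by
      have h3 : ∑ i ∈ Finset.univ.erase j, (v i * pc S i) ≤
          ∑ _i ∈ Finset.univ.erase j, (1 : ℝ) :=
        Finset.sum_le_sum fun i _ => by rcases ht1 i with h | h <;> rw [h] <;> norm_num
      rw [Finset.sum_const, Finset.card_erase_of_mem (Finset.mem_univ j), Finset.card_univ,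
        Fintype.card_fin, nsmul_eq_mul, mul_one] at h3
      have h4 : ((n - 1 : ℕ) : ℝ) = (n : ℝ) - 1 := by push_cast [Nat.cast_sub hn]; ring
      linarith [h3, h4.le]
    rw [hsplit, hj]
    linarith

lemma pf_affine (S : Finset (Fin n)) (p q : Fin n → ℝ) (a b : ℝ) :
    pf S (a • p + b • q) = a * pf S p + b * pf S q := by
  unfold pf
  rw [Finset.mul_sum, Finset.mul_sum, ← Finset.sum_add_distrib]
  refine Finset.sum_congr rfl fun i _ => ?_
  simp only [Pi.add_apply, Pi.smul_apply, smul_eq_mul]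
  ring

lemma Kset_convex : Convex ℝ (Kset n) := by
  intro p hp q hq a b ha hb hab
  constructor
  · intro i
    have h1 := (convex_Icc (-1 : ℝ) 1) (hp.1 i) (hq.1 i) ha hb hab
    simpa using h1
  · intro S hS
    rw [pf_affine]
    have h1 := mul_le_mul_of_nonneg_left (hp.2 S hS) ha
    have h2 := mul_le_mul_of_nonneg_left (hq.2 S hS) hb
    nlinarith [h1, h2]

lemma pf_continuous (S : Finset (Fin n)) : Continuous fun x : Fin n → ℝ => pf S x := by
  unfold pf
  exact continuous_finset_sum _ fun i _ => (continuous_apply i).mul continuous_const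

lemma Kset_closed : IsClosed (Kset n) := by
  have h : Kset n = (⋂ i, {x : Fin n → ℝ | x i ∈ Set.Icc (-1 : ℝ) 1}) ∩
      ⋂ (S : Finset (Fin n)) (_ : Odd S.card), {x | pf S x ≤ (n : ℝ) - 2} := by
    ext x
    simp only [Kset, Set.mem_setOf_eq, Set.mem_inter_iff, Set.mem_iInter]
  rw [h]
  refine IsClosed.inter (isClosed_iInter fun i => ?_)
    (isClosed_iInter fun S => isClosed_iInter fun hS => ?_)
  · exact IsClosed.preimage (continuous_apply i) isClosed_Icc
  · exact isClosed_le (pf_continuous S) continuous_const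

lemma Kset_compact : IsCompact (Kset n) := by
  refine IsCompact.of_isClosed_subset
    (isCompact_univ_pi fun _ : Fin n => (isCompact_Icc : IsCompact (Set.Icc (-1 : ℝ) 1)))
    Kset_closed ?_
  intro x hx
  rw [Set.mem_univ_pi]
  exact fun i => hx.1 i

lemma Vset_finite : (Vset n).Finite := by
  refine Set.Finite.subset (Set.Finite.pi fun _ : Fin n =>
    (Set.toFinite ({1, -1} : Set ℝ))) ?_
  intro v hv
  rw [Set.mem_pi]
  intro i _
  rcases hv.1 i with h | h <;> simp [h]

lemma even_card_symmDiff {α : Type*} [DecidableEq α] {S T : Finset α} (hS : Odd S.card)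
    (hT : Odd T.card) : Even ((symmDiff S T).card) := by
  have hdis : Disjoint (symmDiff S T) (S ∩ T) := by
    rw [Finset.disjoint_left]
    intro a ha ha'
    rw [Finset.mem_symmDiff] at ha
    rw [Finset.mem_inter] at ha'
    tauto
  have hun : (symmDiff S T) ∪ (S ∩ T) = S ∪ T := by
    ext a
    simp only [Finset.mem_union, Finset.mem_symmDiff, Finset.mem_inter]
    tauto
  have h1 : (symmDiff S T).card + (S ∩ T).card = (S ∪ T).card := by
    rw [← Finset.card_union_of_disjoint hdis, hun]
  have h2 : (S ∪ T).card + (S ∩ T).card = S.card + T.card :=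
    Finset.card_union_add_card_inter S T
  rw [Nat.odd_iff] at hS hT
  rw [Nat.even_iff]
  omega

lemma sub_sum_ge (w : Fin n → ℝ) (hle : ∀ i, w i ≤ 1) (hsum : ∑ i, w i = (n : ℝ) - 2)
    (T : Finset (Fin n)) : (T.card : ℝ) - 2 ≤ ∑ i ∈ T, w i := by
  have h1 : ∑ i ∈ Finset.univ \ T, w i ≤ (((Finset.univ \ T).card : ℕ) : ℝ) := by
    calc ∑ i ∈ Finset.univ \ T, w i ≤ ∑ _i ∈ Finset.univ \ T, (1 : ℝ) :=
          Finset.sum_le_sum fun i _ => hle i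
      _ = _ := by rw [Finset.sum_const, nsmul_eq_mul, mul_one]
  have h2 : ∑ i ∈ Finset.univ \ T, w i = ((n : ℝ) - 2) - ∑ i ∈ T, w i := by
    rw [Finset.sum_sdiff_eq_sub (Finset.subset_univ T), hsum]
  have hTle : T.card ≤ n := by
    simpa using Finset.card_le_card (Finset.subset_univ T)
  have h3 : (((Finset.univ \ T).card : ℕ) : ℝ) = (n : ℝ) - T.card := by
    rw [Finset.card_sdiff_of_subset (Finset.subset_univ T), Finset.card_univ, Fintype.card_fin]
    push_cast [Nat.cast_sub hTle]
    ring
  rw [h2, h3] at h1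
  linarith

/-- Generic two-point direction construction. -/
lemma mk2 (x w : Fin n → ℝ) (p q : Fin n) (hpq : p ≠ q)
    (hp : -1 < x p ∧ x p < 1) (hq : -1 < x q ∧ x q < 1)
    (H : ∀ D : Finset (Fin n), Even D.card → ∑ i ∈ D, w i = 0 → (p ∈ D ↔ q ∈ D)) :
    ∃ u : Fin n → ℝ, u ≠ 0 ∧ (∀ i, u i ≠ 0 → (-1 < x i ∧ x i < 1)) ∧ (∑ i, u i = 0) ∧
      ∀ D : Finset (Fin n), Even D.card → ∑ i ∈ D, w i = 0 → ∑ i ∈ D, u i = 0 := by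
  classical
  refine ⟨fun i => (if i = p then (1 : ℝ) else 0) + (if i = q then (-1 : ℝ) else 0),
    ?_, ?_, ?_, ?_⟩
  · intro hcon
    have h1 := congrFun hcon p
    simp [hpq] at h1
  · intro i hi
    by_cases h1 : i = p
    · exact h1 ▸ hp
    by_cases h2 : i = q
    · exact h2 ▸ hq
    simp [h1, h2] at hi
  · rw [Finset.sum_add_distrib, Finset.sum_ite_eq' Finset.univ p fun _ => (1 : ℝ),
      Finset.sum_ite_eq' Finset.univ q fun _ => (-1 : ℝ)]
    simp
  · intro D hDe hDw
    have hiff := H D hDe hDw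
    rw [Finset.sum_add_distrib, Finset.sum_ite_eq' D p fun _ => (1 : ℝ),
      Finset.sum_ite_eq' D q fun _ => (-1 : ℝ)]
    by_cases h1 : p ∈ D
    · simp [h1, hiff.mp h1]
    · have h2 : q ∉ D := fun h => h1 (hiff.mpr h)
      simp [h1, h2]

lemma direction (x : Fin n → ℝ) (hxK : x ∈ Kset n) {j : Fin n}
    (hj : -1 < x j ∧ x j < 1) :
    ∃ d : Fin n → ℝ, d ≠ 0 ∧ (∀ i, d i ≠ 0 → (-1 < x i ∧ x i < 1)) ∧
      ∀ S : Finset (Fin n), Odd S.card → pf S x = (n : ℝ) - 2 → pf S d = 0 := by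
  classical
  by_cases htight : ∃ S₀ : Finset (Fin n), Odd S₀.card ∧ pf S₀ x = (n : ℝ) - 2
  swap
  · push_neg at htight
    refine ⟨fun i => if i = j then 1 else 0, ?_, ?_, ?_⟩
    · intro hcon
      have h1 := congrFun hcon j
      simp at h1
    · intro i hi
      by_cases h1 : i = j
      · exact h1 ▸ hj
      · simp [h1] at hi
    · intro S hSo hSt
      exact absurd hSt (htight S hSo)
  obtain ⟨S₀, hS₀o, hS₀t⟩ := htight
  set w : Fin n → ℝ := fun i => x i * pc S₀ i with hwdef
  have hw_le : ∀ i, w i ≤ 1 := by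
    intro i
    have h1 := hxK.1 i
    rcases pc_cases S₀ i with h | h <;> simp only [hwdef, h] <;> simp at h1 ⊢ <;> linarith
  have hwsum : ∑ i, w i = (n : ℝ) - 2 := hS₀t
  have hgen := sub_sum_ge w hw_le hwsum
  have hfrac_iff : ∀ i, (-1 < w i ∧ w i < 1) ↔ (-1 < x i ∧ x i < 1) := by
    intro i
    rcases pc_cases S₀ i with h | h <;> simp only [hwdef, h] <;> constructor <;>
      rintro ⟨h1, h2⟩ <;> constructor <;> nlinarith
  have hpair : ∀ p q : Fin n, p ≠ q → 0 ≤ w p + w q := by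
    intro p q hne
    have h1 := hgen {p, q}
    rw [Finset.sum_pair hne, Finset.card_pair hne] at h1
    push_cast at h1
    linarith
  have htrip : ∀ p q r : Fin n, p ≠ q → p ≠ r → q ≠ r → 1 ≤ w p + w q + w r := by
    intro p q r h1 h2 h3
    have h4 := hgen {p, q, r}
    have hc : ({p, q, r} : Finset (Fin n)).card = 3 := by
      rw [Finset.card_insert_of_notMem (by simp [h1, h2]),
        Finset.card_insert_of_notMem (by simp [h3]), Finset.card_singleton]
    have hs : ∑ i ∈ ({p, q, r} : Finset (Fin n)), w i = w p + w q + w r := by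
      rw [Finset.sum_insert (by simp [h1, h2]), Finset.sum_insert (by simp [h3]),
        Finset.sum_singleton]
      ring
    rw [hc, hs] at h4
    push_cast at h4
    linarith
  have hnf : ∀ i, ¬(-1 < x i ∧ x i < 1) → w i = 1 := by
    intro i hi
    have h1 := hxK.1 i
    simp only [Set.mem_Icc] at h1
    have h2 : x i = 1 ∨ x i = -1 := by
      by_contra hc
      push_neg at hc
      exact hi ⟨lt_of_le_of_ne h1.1 (Ne.symm hc.2), lt_of_le_of_ne h1.2 hc.1⟩
    have h3 : w i = 1 ∨ w i = -1 := by
      rcases h2 with h | h <;> rcases pc_cases S₀ i with h' | h' <;>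
        simp only [hwdef, h, h'] <;> norm_num
    rcases h3 with h | h
    · exact h
    · exfalso
      have hij : i ≠ j := by
        intro he
        exact hi (he ▸ hj)
      have h4 := hpair i j hij
      have h5 : w j < 1 := ((hfrac_iff j).mpr hj).2
      rw [h] at h4
      linarith
  -- reduce to the existence of u
  suffices hu : ∃ u : Fin n → ℝ, u ≠ 0 ∧ (∀ i, u i ≠ 0 → (-1 < x i ∧ x i < 1)) ∧
      (∑ i, u i = 0) ∧
      ∀ D : Finset (Fin n), Even D.card → ∑ i ∈ D, w i = 0 → ∑ i ∈ D, u i = 0 by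
    obtain ⟨u, hu0, hus, husum, huD⟩ := hu
    refine ⟨fun i => pc S₀ i * u i, ?_, ?_, ?_⟩
    · intro hcon
      apply hu0
      funext i
      have h1 := congrFun hcon i
      simp only [Pi.zero_apply] at h1 ⊢
      rcases pc_cases S₀ i with h | h <;> rw [h] at h1 <;> linarith
    · intro i hi
      refine hus i fun h0 => hi ?_
      simp [h0]
    · intro S hSo hSt
      set D : Finset (Fin n) := symmDiff S S₀ with hDdef
      have hpcS : ∀ i, pc S i = if i ∈ D then -pc S₀ i else pc S₀ i := by
        intro i
        by_cases h1 : i ∈ S <;> by_cases h2 : i ∈ S₀ <;>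
          simp [pc, hDdef, Finset.mem_symmDiff, h1, h2]
      have hsplit : ∀ v : Fin n → ℝ,
          ∑ i, v i * pc S i = (∑ i, v i * pc S₀ i) - 2 * ∑ i ∈ D, v i * pc S₀ i := by
        intro v
        have e1 : ∀ i, v i * pc S i
            = v i * pc S₀ i - 2 * (if i ∈ D then v i * pc S₀ i else 0) := by
          intro i
          rw [hpcS i]
          split <;> ring
        rw [Finset.sum_congr rfl fun i _ => e1 i, Finset.sum_sub_distrib, ← Finset.mul_sum,
          Finset.sum_ite_mem, Finset.univ_inter]
      have hDeven : Even D.card := even_card_symmDiff hSo hS₀o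
      have hDw : ∑ i ∈ D, w i = 0 := by
        have h1 : pf S x = (∑ i, w i) - 2 * ∑ i ∈ D, w i := hsplit x
        rw [hSt, hwsum] at h1
        linarith
      have h2 : pf S (fun i => pc S₀ i * u i)
          = (∑ i, u i) - 2 * ∑ i ∈ D, u i := by
        have h3 := hsplit (fun i => pc S₀ i * u i)
        have h4 : ∀ i, pc S₀ i * u i * pc S₀ i = u i := by
          intro i
          rcases pc_cases S₀ i with h | h <;> rw [h] <;> ring
        unfold pf
        rw [h3, Finset.sum_congr rfl fun i _ => h4 i,
          Finset.sum_congr rfl fun (i : Fin n) (_ : i ∈ D) => h4 i]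
      rw [h2, husum, huD D hDeven hDw]
      ring
  -- now construct u
  set Ffin : Finset (Fin n) := Finset.univ.filter (fun i => -1 < x i ∧ x i < 1) with hFdef
  have hmemF : ∀ i, i ∈ Ffin ↔ (-1 < x i ∧ x i < 1) := by
    intro i
    simp [hFdef]
  have hFfsum : ∑ i ∈ Ffin, w i = (Ffin.card : ℝ) - 2 := by
    have h1 : ∑ i ∈ Finset.univ \ Ffin, w i = (((Finset.univ \ Ffin).card : ℕ) : ℝ) := by
      rw [Finset.sum_congr rfl fun i hi => hnf i (by
        rw [Finset.mem_sdiff] at hi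
        intro hc
        exact hi.2 ((hmemF i).mpr hc))]
      rw [Finset.sum_const, nsmul_eq_mul, mul_one]
    have h2 : ∑ i ∈ Finset.univ \ Ffin, w i = ((n : ℝ) - 2) - ∑ i ∈ Ffin, w i := by
      rw [Finset.sum_sdiff_eq_sub (Finset.subset_univ Ffin), hwsum]
    have hFle : Ffin.card ≤ n := by
      simpa using Finset.card_le_card (Finset.subset_univ Ffin)
    have h3 : (((Finset.univ \ Ffin).card : ℕ) : ℝ) = (n : ℝ) - Ffin.card := by
      rw [Finset.card_sdiff_of_subset (Finset.subset_univ Ffin), Finset.card_univ, Fintype.card_fin]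
      push_cast [Nat.cast_sub hFle]
      ring
    rw [h3] at h1
    linarith
  have hsecond : ∀ p, p ∈ Ffin → ∃ k ∈ Ffin, k ≠ p := by
    intro p hp
    by_contra hc
    push_neg at hc
    have h1 : Ffin = {p} := Finset.eq_singleton_iff_unique_mem.mpr ⟨hp, hc⟩
    rw [h1, Finset.sum_singleton, Finset.card_singleton] at hFfsum
    have h2 : w p > -1 := ((hfrac_iff p).mpr ((hmemF p).mp hp)).1
    norm_num at hFfsum
    linarith
  by_cases hneg : ∃ i0, w i0 < 0
  · obtain ⟨i0, hi0⟩ := hneg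
    have hi0xf : -1 < x i0 ∧ x i0 < 1 := by
      by_contra hc
      have := hnf i0 hc
      linarith
    have hi0wf : -1 < w i0 ∧ w i0 < 1 := (hfrac_iff i0).mpr hi0xf
    have hpos : ∀ i, i ≠ i0 → 0 < w i := by
      intro i hne
      by_contra hcon
      push_neg at hcon
      have h1 := hpair i i0 hne
      linarith
    set a : ℝ := -w i0 with hadef
    have ha : 0 < a := by simp [hadef]; linarith
    have ha1 : a < 1 := by simp [hadef]; linarith [hi0wf.1]
    have hDempty : ∀ D : Finset (Fin n), i0 ∉ D → ∑ i ∈ D, w i = 0 → D = ∅ := by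
      intro D hD0 hDw
      by_contra hne
      have hDne : D.Nonempty := Finset.nonempty_iff_ne_empty.mpr hne
      have h1 : 0 < ∑ i ∈ D, w i :=
        Finset.sum_pos (fun i hi => hpos i (fun he => hD0 (he ▸ hi))) hDne
      linarith
    by_cases hbig : ∃ i1, i1 ≠ i0 ∧ (-1 < x i1 ∧ x i1 < 1) ∧ a < w i1
    · -- bespoke construction
      obtain ⟨i1, hne10, hi1f, hi1big⟩ := hbig
      set R : Finset (Fin n) := (Ffin.erase i0).erase i1 with hRdef
      set L : ℝ := a - ∑ i ∈ R, w i with hLdef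
      set u : Fin n → ℝ := fun i =>
        if i = i0 then -a else if i = i1 then L else if i ∈ R then w i else 0 with hudef
      have hu_i0 : u i0 = -a := by simp [hudef]
      have hu_i1 : u i1 = L := by simp [hudef, hne10]
      have hu_R : ∀ i ∈ R, u i = w i := by
        intro i hi
        have h1 : i ≠ i1 := Finset.ne_of_mem_erase hi
        have h2 : i ≠ i0 := Finset.ne_of_mem_erase (Finset.mem_of_mem_erase hi)
        simp [hudef, h1, h2, hi]
      have hu_out : ∀ i, i ≠ i0 → i ≠ i1 → i ∉ R → u i = 0 := by
        intro i h1 h2 h3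
        simp [hudef, h1, h2, h3]
      refine ⟨u, ?_, ?_, ?_, ?_⟩
      · intro hcon
        have h1 := congrFun hcon i0
        rw [hu_i0] at h1
        simp at h1
        linarith
      · intro i hi
        by_cases h1 : i = i0
        · exact h1 ▸ hi0xf
        by_cases h2 : i = i1
        · exact h2 ▸ hi1f
        by_cases h3 : i ∈ R
        · exact (hmemF i).mp (Finset.mem_of_mem_erase (Finset.mem_of_mem_erase h3))
        · exact absurd (hu_out i h1 h2 h3) hi
      · have hsplit1 : ∑ i, u i = u i0 + ∑ i ∈ Finset.univ.erase i0, u i :=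
          (Finset.add_sum_erase _ _ (Finset.mem_univ i0)).symm
        have hm1 : i1 ∈ Finset.univ.erase i0 := Finset.mem_erase.mpr ⟨hne10, Finset.mem_univ _⟩
        have hsplit2 : ∑ i ∈ Finset.univ.erase i0, u i
            = u i1 + ∑ i ∈ (Finset.univ.erase i0).erase i1, u i :=
          (Finset.add_sum_erase _ _ hm1).symm
        have hconv : ∑ i ∈ (Finset.univ.erase i0).erase i1, u i = ∑ i ∈ R, w i := by
          have e1 : ∀ i ∈ (Finset.univ.erase i0).erase i1, u i = if i ∈ R then w i else 0 := by
            intro i hi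
            have h1 : i ≠ i1 := Finset.ne_of_mem_erase hi
            have h2 : i ≠ i0 := Finset.ne_of_mem_erase (Finset.mem_of_mem_erase hi)
            by_cases h3 : i ∈ R <;> simp [hudef, h1, h2, h3]
          rw [Finset.sum_congr rfl e1, Finset.sum_ite_mem]
          congr 1
          rw [Finset.inter_eq_right.mpr]
          intro i hi
          have h1 : i ≠ i1 := Finset.ne_of_mem_erase hi
          have h2 : i ≠ i0 := Finset.ne_of_mem_erase (Finset.mem_of_mem_erase hi)
          exact Finset.mem_erase.mpr ⟨h1, Finset.mem_erase.mpr ⟨h2, Finset.mem_univ i⟩⟩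
        rw [hsplit1, hsplit2, hconv, hu_i0, hu_i1, hLdef]
        ring
      · intro D hDe hDw
        by_cases hD0 : i0 ∈ D
        · have hEsum : ∑ i ∈ D.erase i0, w i = a := by
            have h1 := Finset.add_sum_erase D w hD0
            rw [hDw] at h1
            simp only [hadef]
            linarith [h1]
          have hEpos : ∀ i ∈ D.erase i0, 0 ≤ w i :=
            fun i hi => (hpos i (Finset.ne_of_mem_erase hi)).le
          have hi1E : i1 ∉ D.erase i0 := by
            intro hmem
            have h1 := Finset.single_le_sum hEpos hmem
            rw [hEsum] at h1
            linarith
          have hER : D.erase i0 ⊆ R := by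
            intro i hi
            have hne0 : i ≠ i0 := Finset.ne_of_mem_erase hi
            have hne1 : i ≠ i1 := fun he => hi1E (he ▸ hi)
            have hle : w i ≤ a := by
              have h1 := Finset.single_le_sum hEpos hi
              rw [hEsum] at h1
              exact h1
            have hfi : -1 < x i ∧ x i < 1 := by
              by_contra hc
              have h2 := hnf i hc
              linarith
            exact Finset.mem_erase.mpr ⟨hne1,
              Finset.mem_erase.mpr ⟨hne0, (hmemF i).mpr hfi⟩⟩
          have h1 : ∑ i ∈ D, u i = u i0 + ∑ i ∈ D.erase i0, u i :=
            (Finset.add_sum_erase _ _ hD0).symm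
          have h2 : ∑ i ∈ D.erase i0, u i = ∑ i ∈ D.erase i0, w i :=
            Finset.sum_congr rfl fun i hi => hu_R i (hER hi)
          rw [h1, h2, hEsum, hu_i0]
          ring
        · rw [hDempty D hD0 hDw]
          simp
    · -- small case: F = {i0, k}
      push_neg at hbig
      have hsmall : ∀ i1, i1 ≠ i0 → (-1 < x i1 ∧ x i1 < 1) → w i1 ≤ a :=
        fun i1 h1 h2 => hbig i1 h1 h2
      have hi0F : i0 ∈ Ffin := (hmemF i0).mpr hi0xf
      obtain ⟨k, hkF, hki0⟩ := hsecond i0 hi0F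
      have hkxf : -1 < x k ∧ x k < 1 := (hmemF k).mp hkF
      have hF2 : ∀ i ∈ Ffin, i = i0 ∨ i = k := by
        by_contra hc
        push_neg at hc
        obtain ⟨l, hlF, hl0, hlk⟩ := hc
        have hsub : ({i0, k, l} : Finset (Fin n)) ⊆ Ffin := by
          intro i hi
          simp only [Finset.mem_insert, Finset.mem_singleton] at hi
          rcases hi with h | h | h <;> rw [h] <;> assumption
        have hc3 : 3 ≤ Ffin.card := by
          have h1 : ({i0, k, l} : Finset (Fin n)).card = 3 := by
            rw [Finset.card_insert_of_notMem (by simp [Ne.symm hki0, Ne.symm hl0]),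
              Finset.card_insert_of_notMem (by simp [Ne.symm hlk]), Finset.card_singleton]
          rw [← h1]
          exact Finset.card_le_card hsub
        have h4 : ∑ i ∈ Ffin.erase i0, w i ≤ a * ((Ffin.erase i0).card : ℝ) := by
          calc ∑ i ∈ Ffin.erase i0, w i ≤ ∑ _i ∈ Ffin.erase i0, a :=
                Finset.sum_le_sum fun i hi => hsmall i (Finset.ne_of_mem_erase hi)
                  ((hmemF i).mp (Finset.mem_of_mem_erase hi))
            _ = _ := by rw [Finset.sum_const, nsmul_eq_mul]; ring
        have h5 : ∑ i ∈ Ffin, w i = w i0 + ∑ i ∈ Ffin.erase i0, w i :=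
          (Finset.add_sum_erase _ _ hi0F).symm
        have h6 : ((Ffin.erase i0).card : ℝ) = (Ffin.card : ℝ) - 1 := by
          rw [Finset.card_erase_of_mem hi0F]
          have : 1 ≤ Ffin.card := Finset.card_pos.mpr ⟨i0, hi0F⟩
          push_cast [Nat.cast_sub this]
          ring
        rw [h6] at h4
        have hc3' : (3 : ℝ) ≤ (Ffin.card : ℝ) := by exact_mod_cast hc3
        have hkey : (Ffin.card : ℝ) - 2 ≤ -a + a * ((Ffin.card : ℝ) - 1) := by
          have h7 := hFfsum
          rw [h5] at h7
          have hwi0 : w i0 = -a := by simp [hadef]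
          linarith [h4]
        nlinarith [mul_pos (sub_pos.mpr ha1)
          (by linarith : (0:ℝ) < (Ffin.card : ℝ) - 2)]
      refine mk2 x w i0 k (Ne.symm hki0) hi0xf hkxf ?_
      intro D hDe hDw
      by_cases hD0 : i0 ∈ D
      · simp only [hD0, true_iff]
        have hEsum : ∑ i ∈ D.erase i0, w i = a := by
          have h1 := Finset.add_sum_erase D w hD0
          rw [hDw] at h1
          simp only [hadef]
          linarith [h1]
        have hEpos : ∀ i ∈ D.erase i0, 0 ≤ w i :=
          fun i hi => (hpos i (Finset.ne_of_mem_erase hi)).le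
        have hEne : (D.erase i0).Nonempty := by
          by_contra hc
          rw [Finset.not_nonempty_iff_eq_empty] at hc
          rw [hc, Finset.sum_empty] at hEsum
          linarith
        obtain ⟨m, hm⟩ := hEne
        have hmk : m = k := by
          have hne0 : m ≠ i0 := Finset.ne_of_mem_erase hm
          have hle : w m ≤ a := by
            have h1 := Finset.single_le_sum hEpos hm
            rw [hEsum] at h1
            exact h1
          have hfi : -1 < x m ∧ x m < 1 := by
            by_contra hc
            have h2 := hnf m hc
            linarith
          rcases hF2 m ((hmemF m).mpr hfi) with h | h
          · exact absurd h hne0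
          · exact h
        exact Finset.mem_of_mem_erase (hmk ▸ hm)
      · rw [hDempty D hD0 hDw]
        simp
  · -- nonnegative case
    push_neg at hneg
    have hwnn : ∀ i, 0 ≤ w i := fun i => hneg i
    by_cases hz : ∃ z1 z2 : Fin n, z1 ≠ z2 ∧ w z1 = 0 ∧ w z2 = 0
    · obtain ⟨z1, z2, hz12, hwz1, hwz2⟩ := hz
      have hz1f : -1 < x z1 ∧ x z1 < 1 := (hfrac_iff z1).mp (by rw [hwz1]; norm_num)
      have hz2f : -1 < x z2 ∧ x z2 < 1 := (hfrac_iff z2).mp (by rw [hwz2]; norm_num)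
      refine mk2 x w z1 z2 hz12 hz1f hz2f ?_
      intro D hDe hDw
      have hD0 : ∀ i ∈ D, w i = 0 :=
        (Finset.sum_eq_zero_iff_of_nonneg fun i _ => hwnn i).mp hDw
      have step : ∀ p q : Fin n, p ≠ q → w p = 0 → w q = 0 → p ∈ D → q ∈ D := by
        intro p q hpq hwp hwq hpD
        by_contra hqD
        have hc2 : 1 < D.card := by
          have h1 : 1 ≤ D.card := Finset.card_pos.mpr ⟨p, hpD⟩
          rcases hDe with ⟨t, ht⟩
          omega
        obtain ⟨r, hrD, hrp⟩ := Finset.exists_mem_ne hc2 p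
        have hrq : r ≠ q := fun h => hqD (h ▸ hrD)
        have h2 := htrip p q r hpq (Ne.symm hrp) (Ne.symm hrq)
        rw [hwp, hwq, hD0 r hrD] at h2
        linarith
      exact ⟨step z1 z2 hz12 hwz1 hwz2, step z2 z1 (Ne.symm hz12) hwz2 hwz1⟩
    · push_neg at hz
      have hjF : j ∈ Ffin := (hmemF j).mpr hj
      obtain ⟨k, hkF, hkj⟩ := hsecond j hjF
      have hkxf : -1 < x k ∧ x k < 1 := (hmemF k).mp hkF
      refine mk2 x w j k (Ne.symm hkj) hj hkxf ?_
      intro D hDe hDw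
      have hD0 : ∀ i ∈ D, w i = 0 :=
        (Finset.sum_eq_zero_iff_of_nonneg fun i _ => hwnn i).mp hDw
      have hDem : D = ∅ := by
        by_contra hc
        obtain ⟨m, hm⟩ := Finset.nonempty_iff_ne_empty.mpr hc
        have hc2 : 1 < D.card := by
          have h1 : 1 ≤ D.card := Finset.card_pos.mpr ⟨m, hm⟩
          rcases hDe with ⟨t, ht⟩
          omega
        obtain ⟨m', hm', hmm'⟩ := Finset.exists_mem_ne hc2 m
        exact hz m' m hmm' (hD0 m' hm') (hD0 m hm)
      rw [hDem]
      simp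

lemma perturb (x d : Fin n → ℝ) (hxK : x ∈ Kset n)
    (hds : ∀ i, d i ≠ 0 → (-1 < x i ∧ x i < 1))
    (hdt : ∀ S : Finset (Fin n), Odd S.card → pf S x = (n : ℝ) - 2 → pf S d = 0) :
    ∃ ε : ℝ, 0 < ε ∧ x + ε • d ∈ Kset n ∧ x - ε • d ∈ Kset n := by
  classical
  set g : Fin n → ℝ := fun i =>
    if d i = 0 then 1 else min ((1 - x i) / |d i|) ((x i + 1) / |d i|) with hgdef
  set h : Finset (Fin n) → ℝ := fun S =>
    if Odd S.card ∧ pf S x ≠ (n : ℝ) - 2 then ((n : ℝ) - 2 - pf S x) / (|pf S d| + 1)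
    else 1 with hhdef
  set G : Finset ℝ := insert 1 ((Finset.univ.image g) ∪ (Finset.univ.image h)) with hGdef
  have hGne : G.Nonempty := ⟨1, Finset.mem_insert_self _ _⟩
  set ε := G.min' hGne with hεdef
  have hgpos : ∀ i, 0 < g i := by
    intro i
    simp only [hgdef]
    split
    · norm_num
    · next hdi =>
      have h1 := hds i hdi
      have h2 : 0 < |d i| := abs_pos.mpr hdi
      exact lt_min (div_pos (by linarith [h1.2]) h2) (div_pos (by linarith [h1.1]) h2)
  have hhpos : ∀ S, 0 < h S := by
    intro S
    simp only [hhdef]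
    split
    · next hc =>
      have h1 : pf S x < (n : ℝ) - 2 := lt_of_le_of_ne (hxK.2 S hc.1) hc.2
      have h2 : (0 : ℝ) < |pf S d| + 1 := by positivity
      exact div_pos (by linarith) h2
    · norm_num
  have hpos : ∀ y ∈ G, 0 < y := by
    intro y hy
    rw [hGdef, Finset.mem_insert] at hy
    rcases hy with rfl | hy
    · norm_num
    rw [Finset.mem_union] at hy
    rcases hy with hy | hy <;> rw [Finset.mem_image] at hy <;> obtain ⟨i, _, rfl⟩ := hy
    · exact hgpos i
    · exact hhpos i
  have hε0 : 0 < ε := hpos _ (G.min'_mem hGne)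
  have hεg : ∀ i, ε ≤ g i := by
    intro i
    apply Finset.min'_le
    rw [hGdef]
    exact Finset.mem_insert_of_mem (Finset.mem_union_left _
      (Finset.mem_image_of_mem g (Finset.mem_univ i)))
  have hεh : ∀ S, ε ≤ h S := by
    intro S
    apply Finset.min'_le
    rw [hGdef]
    exact Finset.mem_insert_of_mem (Finset.mem_union_right _
      (Finset.mem_image_of_mem h (Finset.mem_univ S)))
  have key : ∀ t : ℝ, |t| ≤ ε → x + t • d ∈ Kset n := by
    intro t ht
    have htabs : 0 ≤ |t| := abs_nonneg t
    constructor
    · intro i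
      simp only [Pi.add_apply, Pi.smul_apply, smul_eq_mul, Set.mem_Icc]
      by_cases hdi : d i = 0
      · have h1 := hxK.1 i
        simp only [Set.mem_Icc] at h1
        rw [hdi, mul_zero, add_zero]
        exact h1
      · have h1 : ε ≤ min ((1 - x i) / |d i|) ((x i + 1) / |d i|) := by
          have h2 := hεg i
          simp only [hgdef, hdi, if_false] at h2
          exact h2
        have habs : 0 < |d i| := abs_pos.mpr hdi
        have h3 : ε * |d i| ≤ 1 - x i := by
          have h4 : ε ≤ (1 - x i) / |d i| := le_trans h1 (min_le_left _ _)
          calc ε * |d i| ≤ ((1 - x i) / |d i|) * |d i| :=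
                mul_le_mul_of_nonneg_right h4 habs.le
            _ = 1 - x i := div_mul_cancel₀ _ (ne_of_gt habs)
        have h5 : ε * |d i| ≤ x i + 1 := by
          have h4 : ε ≤ (x i + 1) / |d i| := le_trans h1 (min_le_right _ _)
          calc ε * |d i| ≤ ((x i + 1) / |d i|) * |d i| :=
                mul_le_mul_of_nonneg_right h4 habs.le
            _ = x i + 1 := div_mul_cancel₀ _ (ne_of_gt habs)
        have h6 : |t * d i| ≤ ε * |d i| := by
          rw [abs_mul]
          exact mul_le_mul_of_nonneg_right ht (abs_nonneg _)
        have h7 := le_abs_self (t * d i)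
        have h8 := neg_abs_le (t * d i)
        constructor <;> nlinarith
    · intro S hSo
      have hlin : pf S (x + t • d) = pf S x + t * pf S d := by
        unfold pf
        rw [Finset.mul_sum, ← Finset.sum_add_distrib]
        refine Finset.sum_congr rfl fun i _ => ?_
        simp only [Pi.add_apply, Pi.smul_apply, smul_eq_mul]
        ring
      rw [hlin]
      by_cases hts : pf S x = (n : ℝ) - 2
      · rw [hdt S hSo hts, mul_zero, add_zero, hts]
      · have hlt : pf S x < (n : ℝ) - 2 := lt_of_le_of_ne (hxK.2 S hSo) hts
        have h1 : ε ≤ ((n : ℝ) - 2 - pf S x) / (|pf S d| + 1) := by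
          have h2 := hεh S
          simp only [hhdef] at h2
          rw [if_pos ⟨hSo, hts⟩] at h2
          exact h2
        have hden : (0 : ℝ) < |pf S d| + 1 := by positivity
        have h3 : ε * (|pf S d| + 1) ≤ (n : ℝ) - 2 - pf S x := by
          rw [← le_div_iff₀ hden]
          exact h1
        have h4 : t * pf S d ≤ ε * (|pf S d| + 1) := by
          calc t * pf S d ≤ |t * pf S d| := le_abs_self _
            _ = |t| * |pf S d| := abs_mul _ _
            _ ≤ ε * |pf S d| := mul_le_mul_of_nonneg_right ht (abs_nonneg _)
            _ ≤ ε * (|pf S d| + 1) := by nlinarith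
        linarith
  have hp := key ε (by rw [abs_of_pos hε0])
  have hm := key (-ε) (by rw [abs_neg, abs_of_pos hε0])
  refine ⟨ε, hε0, hp, ?_⟩
  rw [sub_eq_add_neg, ← neg_smul]
  exact hm

lemma extremePoints_subset : Set.extremePoints ℝ (Kset n) ⊆ Vset n := by
  classical
  intro x hx
  obtain ⟨hxK, hext⟩ := hx
  by_cases hall : ∀ i, x i = 1 ∨ x i = -1
  · refine ⟨hall, ?_⟩
    set S : Finset (Fin n) := Finset.univ.filter (fun i => x i = -1) with hSdef
    have hprod : ∏ i, x i = (-1 : ℝ) ^ S.card := by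
      have h1 : ∀ i ∈ Finset.univ, x i = if i ∈ S then (-1 : ℝ) else 1 := by
        intro i _
        by_cases h : x i = -1
        · simp [hSdef, h]
        · have h2 : x i = 1 := (hall i).resolve_right h
          simp [hSdef, h, h2]
      rw [Finset.prod_congr rfl h1, Finset.prod_ite_mem, Finset.univ_inter, Finset.prod_const]
    rcases Nat.even_or_odd S.card with he | ho
    · rw [hprod, he.neg_one_pow]
    · exfalso
      have h2 : pf S x = (n : ℝ) := by
        unfold pf
        have h3 : ∀ i ∈ Finset.univ, x i * pc S i = 1 := by
          intro i _
          by_cases h : i ∈ S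
          · have h4 : x i = -1 := by
              have := h
              simp only [hSdef, Finset.mem_filter] at this
              exact this.2
            simp [pc, h, h4]
          · have h4 : x i = 1 := by
              rcases hall i with h5 | h5
              · exact h5
              · exact absurd (by simp [hSdef, h5] : i ∈ S) h
            simp [pc, h, h4]
        rw [Finset.sum_congr rfl h3, Finset.sum_const, Finset.card_univ, Fintype.card_fin,
          nsmul_eq_mul, mul_one]
      have h5 := hxK.2 S ho
      rw [h2] at h5
      linarith
  · push_neg at hall
    obtain ⟨j, hj1, hj2⟩ := hall
    have hIcc := hxK.1 j
    simp only [Set.mem_Icc] at hIcc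
    have hj : -1 < x j ∧ x j < 1 :=
      ⟨lt_of_le_of_ne hIcc.1 (Ne.symm hj2), lt_of_le_of_ne hIcc.2 hj1⟩
    exfalso
    obtain ⟨d, hd0, hds, hdt⟩ := direction x hxK hj
    obtain ⟨ε, hε0, hp, hm⟩ := perturb x d hxK hds hdt
    have hseg : x ∈ openSegment ℝ (x - ε • d) (x + ε • d) := by
      refine ⟨1/2, 1/2, by norm_num, by norm_num, by norm_num, ?_⟩
      funext i
      simp only [Pi.add_apply, Pi.sub_apply, Pi.smul_apply, smul_eq_mul]
      ring
    have heq := hext hm hp hseg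
    apply hd0
    have h1 : ε • d = 0 := by
      have h2 : x - ε • d = x := heq
      have h3 := sub_eq_self.mp h2
      exact h3
    rcases smul_eq_zero.mp h1 with h | h
    · exact absurd h (ne_of_gt hε0)
    · exact h

end ParityPolytopeAux

open ParityPolytopeAux

/-- The parity polytope. -/
def parityPolytope (n : ℕ) : Set (Fin n → ℝ) :=
  convexHull ℝ {x | (∀ i, x i = 1 ∨ x i = -1) ∧ ∏ i, x i = 1}

/-- Halfspace description of the parity polytope: `x ∈ PP_n` iff
`x ∈ [-1,1]^n` and `⟨x, 1 - 2·1_S⟩ ≤ n - 2` for every odd subset `S ⊆ [n]`. -/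
theorem parityPolytope_eq_halfspaces (n : ℕ) :
    parityPolytope n =
      {x : Fin n → ℝ |
        (∀ i, x i ∈ Set.Icc (-1 : ℝ) 1) ∧
        ∀ S : Finset (Fin n), Odd S.card →
          ∑ i, x i * (1 - 2 * (if i ∈ S then (1 : ℝ) else 0)) ≤ (n : ℝ) - 2} := by
  have hpf : ∀ (S : Finset (Fin n)) (x : Fin n → ℝ),
      ∑ i, x i * (1 - 2 * (if i ∈ S then (1 : ℝ) else 0)) = pf S x := by
    intro S x
    refine Finset.sum_congr rfl fun i _ => ?_
    unfold pc
    split <;> ring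
  have hset : {x : Fin n → ℝ |
      (∀ i, x i ∈ Set.Icc (-1 : ℝ) 1) ∧
      ∀ S : Finset (Fin n), Odd S.card →
        ∑ i, x i * (1 - 2 * (if i ∈ S then (1 : ℝ) else 0)) ≤ (n : ℝ) - 2} = Kset n := by
    ext x
    simp only [Set.mem_setOf_eq, Kset]
    constructor <;> rintro ⟨h1, h2⟩ <;> refine ⟨h1, fun S hS => ?_⟩
    · rw [← hpf S x]
      exact h2 S hS
    · rw [hpf S x]
      exact h2 S hS
  rw [hset]
  apply Set.Subset.antisymm
  · exact convexHull_min Vset_subset_Kset Kset_convex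
  · calc Kset n
        = closure (convexHull ℝ (Set.extremePoints ℝ (Kset n))) :=
          (closure_convexHull_extremePoints Kset_compact Kset_convex).symm
      _ ⊆ closure (convexHull ℝ (Vset n)) :=
          closure_mono (convexHull_mono extremePoints_subset)
      _ = convexHull ℝ (Vset n) := (Vset_finite.isClosed_convexHull (𝕜 := ℝ)).closure_eq
      _ = parityPolytope n := rfl
end

section
/- For every d ∈ PP_n (the parity polytope), there exists X ∈ SO(n) with diag(X) = d. -/
open Matrix

noncomputable def Rot (θ : ℝ) : Matrix (Fin 2) (Fin 2) ℝ :=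
  !![Real.cos θ, -Real.sin θ; Real.sin θ, Real.cos θ]

lemma Rot_orth (θ : ℝ) : (Rot θ)ᵀ * Rot θ = 1 := by
  have h := Real.sin_sq_add_cos_sq θ
  ext i j
  fin_cases i <;> fin_cases j <;>
    simp [Rot, Matrix.mul_apply, Fin.sum_univ_two, Matrix.one_apply,
      Matrix.transpose_apply, Matrix.vecHead, Matrix.vecTail] <;>
    nlinarith [h]

lemma Rot_det (θ : ℝ) : (Rot θ).det = 1 := by
  simp [Rot, Matrix.det_fin_two_of]
  nlinarith [Real.sin_sq_add_cos_sq θ]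

lemma key (n : ℕ) : ∀ (ι : Type) (t : Finset ι) (w : ι → ℝ) (z : ι → Fin n → ℝ),
    (∀ i ∈ t, 0 ≤ w i) → (∑ i ∈ t, w i) = 1 →
    (∀ i ∈ t, (∀ j, z i j = 1 ∨ z i j = -1) ∧ ∏ j, z i j = 1) →
    ∃ X ∈ SpecialOrthogonal n, Matrix.diag X = ∑ i ∈ t, w i • z i := by
  induction n with
  | zero =>
    intro ι t w z hw hw1 hz
    refine ⟨1, ⟨by simp, by simp⟩, ?_⟩
    funext i
    exact i.elim0
  | succ m ih =>
    cases m with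
    | zero =>
      intro ι t w z hw hw1 hz
      refine ⟨1, ⟨by simp, by simp⟩, ?_⟩
      funext j
      have hj : j = 0 := Fin.eq_zero j
      subst hj
      have : ∀ i ∈ t, w i • z i 0 = w i := by
        intro i hi
        have h1 : z i 0 = 1 := by
          have := (hz i hi).2
          rwa [Fin.prod_univ_one] at this
        simp [h1]
      simp only [Finset.sum_apply, Pi.smul_apply]
      rw [Finset.sum_congr rfl this, hw1]
      simp [Matrix.diag_one]
    | succ m =>
      intro ι t w z hw hw1 hz
      -- indices
      set a : Fin (m + 2) := ⟨m, by omega⟩ with ha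
      set b : Fin (m + 2) := Fin.last (m + 1) with hb
      -- merged vertex family
      set z' : ι → Fin (m + 1) → ℝ :=
        fun k => Fin.snoc (fun i : Fin m => z k i.castSucc.castSucc) (z k a * z k b) with hz'def
      have hcs : ∀ i : Fin m, (Fin.last m).castSucc = a := by
        intro i; apply Fin.ext; simp [ha]
      have hz' : ∀ i ∈ t, (∀ j, z' i j = 1 ∨ z' i j = -1) ∧ ∏ j, z' i j = 1 := by
        intro k hk
        obtain ⟨h1, h2⟩ := hz k hk
        constructor
        · intro j
          refine Fin.lastCases ?_ ?_ j
          · simp only [hz'def, Fin.snoc_last]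
            rcases h1 a with ha1 | ha1 <;> rcases h1 b with hb1 | hb1 <;>
              simp [ha1, hb1]
          · intro i
            simp only [hz'def, Fin.snoc_castSucc]
            exact h1 _
        · have hp2 : ∏ j : Fin (m + 2), z k j =
              ((∏ i : Fin m, z k i.castSucc.castSucc) * z k a) * z k b := by
            rw [Fin.prod_univ_castSucc, Fin.prod_univ_castSucc]
            have hla : (Fin.last m).castSucc = a := by apply Fin.ext; simp [ha]
            rw [hla]
          rw [Fin.prod_univ_castSucc]
          simp only [hz'def, Fin.snoc_last, Fin.snoc_castSucc]
          rw [hp2] at h2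
          linarith [h2]
      obtain ⟨X', ⟨hX'o, hX'd⟩, hX'diag⟩ := ih ι t w z' hw hw1 hz'
      -- key scalars
      set p : ℝ := ∑ k ∈ t, w k * z k a with hp
      set q : ℝ := ∑ k ∈ t, w k * z k b with hq
      set s : ℝ := ∑ k ∈ t, w k * (z k a * z k b) with hs
      -- inequalities
      have habs1 : |q - p| ≤ 1 - s := by
        have h1 : q - p = ∑ k ∈ t, (w k * z k b - w k * z k a) := by
          rw [Finset.sum_sub_distrib]
        have h2 : ∀ k ∈ t, |w k * z k b - w k * z k a| ≤ w k * (1 - z k a * z k b) := by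
          intro k hk
          have hwk := hw k hk
          rcases (hz k hk).1 a with h | h <;> rcases (hz k hk).1 b with h' | h' <;>
            rw [h, h', abs_le] <;> constructor <;> nlinarith [hwk]
        calc |q - p| ≤ ∑ k ∈ t, |w k * z k b - w k * z k a| := by
              rw [h1]; exact Finset.abs_sum_le_sum_abs _ _
          _ ≤ ∑ k ∈ t, w k * (1 - z k a * z k b) := Finset.sum_le_sum h2
          _ = 1 - s := by rw [Finset.sum_congr rfl (fun k _ => mul_sub (w k) 1 _)]
                          rw [Finset.sum_sub_distrib]
                          simp [hw1, hs]
      have habs2 : |p + q| ≤ 1 + s := by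
        have h1 : p + q = ∑ k ∈ t, (w k * z k a + w k * z k b) := by
          rw [Finset.sum_add_distrib]
        have h2 : ∀ k ∈ t, |w k * z k a + w k * z k b| ≤ w k * (1 + z k a * z k b) := by
          intro k hk
          have hwk := hw k hk
          rcases (hz k hk).1 a with h | h <;> rcases (hz k hk).1 b with h' | h' <;>
            rw [h, h', abs_le] <;> constructor <;> nlinarith [hwk]
        calc |p + q| ≤ ∑ k ∈ t, |w k * z k a + w k * z k b| := by
              rw [h1]; exact Finset.abs_sum_le_sum_abs _ _
          _ ≤ ∑ k ∈ t, w k * (1 + z k a * z k b) := Finset.sum_le_sum h2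
          _ = 1 + s := by rw [Finset.sum_congr rfl (fun k _ => mul_add (w k) 1 _)]
                          rw [Finset.sum_add_distrib]
                          simp [hw1, hs]
      -- choose cA, cB
      obtain ⟨cA, hA1, hA2, hA3⟩ : ∃ c : ℝ, (1 - s) * c = q - p ∧ -1 ≤ c ∧ c ≤ 1 := by
        by_cases hone : s = 1
        · refine ⟨0, ?_, by norm_num, by norm_num⟩
          have : |q - p| ≤ 0 := by rw [hone] at habs1; linarith
          have : q - p = 0 := by
            have := abs_nonneg (q - p); have h3 := abs_eq_zero.mp (le_antisymm ‹|q - p| ≤ 0› this)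
            exact h3
          linarith [this]
        · have hlt : 0 < 1 - s := by
            have := abs_nonneg (q - p)
            have h4 : s ≤ 1 := by linarith
            rcases lt_or_eq_of_le h4 with h | h
            · linarith
            · exact absurd h hone
          refine ⟨(q - p) / (1 - s), ?_, ?_, ?_⟩
          · field_simp
          · rw [le_div_iff₀ hlt]; have := neg_abs_le (q - p); linarith
          · rw [div_le_one hlt]; have := le_abs_self (q - p); linarith
      obtain ⟨cB, hB1, hB2, hB3⟩ : ∃ c : ℝ, (1 + s) * c = p + q ∧ -1 ≤ c ∧ c ≤ 1 := by
        by_cases hone : s = -1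
        · refine ⟨0, ?_, by norm_num, by norm_num⟩
          have : |p + q| ≤ 0 := by rw [hone] at habs2; linarith
          have h3 : p + q = 0 := abs_eq_zero.mp (le_antisymm this (abs_nonneg _))
          linarith [h3]
        · have hlt : 0 < 1 + s := by
            have := abs_nonneg (p + q)
            have h4 : -1 ≤ s := by linarith
            rcases lt_or_eq_of_le h4 with h | h
            · linarith
            · exact absurd h.symm hone
          refine ⟨(p + q) / (1 + s), ?_, ?_, ?_⟩
          · field_simp
          · rw [le_div_iff₀ hlt]; have := neg_abs_le (p + q); linarith
          · rw [div_le_one hlt]; have := le_abs_self (p + q); linarith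
      -- angles
      set A : ℝ := Real.arccos cA with hA
      set B : ℝ := Real.arccos cB with hB
      set α : ℝ := (A + B) / 2 with hα
      set β : ℝ := (B - A) / 2 with hβ
      have hcosA : Real.cos A = cA := Real.cos_arccos hA2 hA3
      have hcosB : Real.cos B = cB := Real.cos_arccos hB2 hB3
      have hu : Real.cos α * Real.cos β = (cA + cB) / 2 := by
        have h1 : Real.cos (α - β) = Real.cos α * Real.cos β + Real.sin α * Real.sin β :=
          Real.cos_sub α β
        have h2 : Real.cos (α + β) = Real.cos α * Real.cos β - Real.sin α * Real.sin β :=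
          Real.cos_add α β
        have e1 : α - β = A := by rw [hα, hβ]; ring
        have e2 : α + β = B := by rw [hα, hβ]; ring
        rw [e1, hcosA] at h1; rw [e2, hcosB] at h2
        linarith
      have hv : Real.sin α * Real.sin β = (cA - cB) / 2 := by
        have h1 : Real.cos (α - β) = Real.cos α * Real.cos β + Real.sin α * Real.sin β :=
          Real.cos_sub α β
        have h2 : Real.cos (α + β) = Real.cos α * Real.cos β - Real.sin α * Real.sin β :=
          Real.cos_add α β
        have e1 : α - β = A := by rw [hα, hβ]; ring
        have e2 : α + β = B := by rw [hα, hβ]; ring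
        rw [e1, hcosA] at h1; rw [e2, hcosB] at h2
        linarith
      -- matrices
      set eT : Fin (m + 1) ⊕ Fin 1 ≃ Fin (m + 2) := finSumFinEquiv with heT
      set eS : Fin m ⊕ Fin 2 ≃ Fin (m + 2) := finSumFinEquiv with heS
      set G1 : Matrix (Fin 2) (Fin 2) ℝ := Rot α with hG1
      set G2 : Matrix (Fin 2) (Fin 2) ℝ := Rot β with hG2
      set A1 : Matrix (Fin (m + 2)) (Fin (m + 2)) ℝ :=
        (fromBlocks X' 0 0 1).submatrix eT.symm eT.symm with hA1def
      set M : Matrix (Fin m ⊕ Fin 2) (Fin m ⊕ Fin 2) ℝ := A1.submatrix eS eS with hMdef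
      set F1 : Matrix (Fin m ⊕ Fin 2) (Fin m ⊕ Fin 2) ℝ := fromBlocks 1 0 0 G1 with hF1
      set F2 : Matrix (Fin m ⊕ Fin 2) (Fin m ⊕ Fin 2) ℝ := fromBlocks 1 0 0 G2 with hF2
      set X : Matrix (Fin (m + 2)) (Fin (m + 2)) ℝ :=
        (F1 * M * F2).submatrix eS.symm eS.symm with hXdef
      -- index facts
      have hidx1 : ∀ i : Fin m, eT.symm (eS (Sum.inl i)) = Sum.inl i.castSucc := by
        intro i
        rw [Equiv.symm_apply_eq]
        apply Fin.ext
        simp [heS, heT]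
      have hidx2 : eT.symm (eS (Sum.inr 0)) = Sum.inl (Fin.last m) := by
        rw [Equiv.symm_apply_eq]
        apply Fin.ext
        simp [heS, heT]
      have hidx3 : eT.symm (eS (Sum.inr 1)) = Sum.inr 0 := by
        rw [Equiv.symm_apply_eq]
        apply Fin.ext
        simp [heS, heT]
      -- block structure of M
      have hM11 : ∀ i : Fin m, M (Sum.inl i) (Sum.inl i) = X' i.castSucc i.castSucc := by
        intro i
        simp only [hMdef, hA1def, Matrix.submatrix_apply, hidx1]
        rfl
      have hdiagX' : ∀ j, X' j j = ∑ k ∈ t, w k * z' k j := by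
        intro j
        have := congrFun hX'diag j
        simpa [Matrix.diag, Finset.sum_apply] using this
      have hslast : X' (Fin.last m) (Fin.last m) = s := by
        rw [hdiagX']
        simp only [hz'def, Fin.snoc_last, hs]
      have e00 : M (Sum.inr 0) (Sum.inr 0) = s := by
        simp only [hMdef, Matrix.submatrix_apply, hA1def, hidx2]
        exact hslast
      have e01 : M (Sum.inr 0) (Sum.inr 1) = 0 := by
        simp only [hMdef, Matrix.submatrix_apply, hA1def, hidx2, hidx3]
        rfl
      have e10 : M (Sum.inr 1) (Sum.inr 0) = 0 := by
        simp only [hMdef, Matrix.submatrix_apply, hA1def, hidx2, hidx3]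
        rfl
      have e11 : M (Sum.inr 1) (Sum.inr 1) = 1 := by
        simp only [hMdef, Matrix.submatrix_apply, hA1def, hidx3]
        simp [Matrix.fromBlocks, Matrix.one_apply]
      have hB22 : M.toBlocks₂₂ = !![s, 0; 0, 1] := by
        ext i j
        have habk : M.toBlocks₂₂ i j = M (Sum.inr i) (Sum.inr j) := rfl
        rw [habk]
        fin_cases i <;> fin_cases j
        · exact e00.trans (by norm_num)
        · exact e01.trans (by norm_num)
        · exact e10.trans (by norm_num)
        · exact e11.trans (by norm_num)
      -- X entries
      have hXblocks : F1 * M * F2 =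
          fromBlocks M.toBlocks₁₁ (M.toBlocks₁₂ * G2) (G1 * M.toBlocks₂₁)
            (G1 * M.toBlocks₂₂ * G2) := by
        conv_lhs => rw [← Matrix.fromBlocks_toBlocks M]
        rw [hF1, hF2, Matrix.fromBlocks_multiply, Matrix.fromBlocks_multiply]
        simp [Matrix.mul_assoc]
      -- orthogonality
      have hXorth : Xᵀ * X = 1 := by
        have horth : (F1 * M * F2)ᵀ * (F1 * M * F2) = 1 := by
          have hF1o : F1ᵀ * F1 = 1 := by
            rw [hF1, Matrix.fromBlocks_transpose, Matrix.fromBlocks_multiply]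
            simp [Rot_orth α, hG1, Matrix.fromBlocks_one]
          have hF2o : F2ᵀ * F2 = 1 := by
            rw [hF2, Matrix.fromBlocks_transpose, Matrix.fromBlocks_multiply]
            simp [Rot_orth β, hG2, Matrix.fromBlocks_one]
          have hMo : Mᵀ * M = 1 := by
            have hA1o : A1ᵀ * A1 = 1 := by
              rw [hA1def, Matrix.transpose_submatrix, Matrix.submatrix_mul_equiv]
              rw [Matrix.fromBlocks_transpose, Matrix.fromBlocks_multiply]
              simp [hX'o, Matrix.fromBlocks_one]
            rw [hMdef, Matrix.transpose_submatrix, Matrix.submatrix_mul_equiv, hA1o]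
            exact Matrix.submatrix_one_equiv eS
          have step : ∀ (P Q : Matrix (Fin m ⊕ Fin 2) (Fin m ⊕ Fin 2) ℝ),
              Pᵀ * P = 1 → Qᵀ * Q = 1 → (P * Q)ᵀ * (P * Q) = 1 := by
            intro P Q hP hQ
            rw [Matrix.transpose_mul, Matrix.mul_assoc,
              ← Matrix.mul_assoc Pᵀ P Q, hP, Matrix.one_mul, hQ]
          exact step _ _ (step _ _ hF1o hMo) hF2o
        rw [hXdef, Matrix.transpose_submatrix, Matrix.submatrix_mul_equiv, horth]
        exact Matrix.submatrix_one_equiv eS.symm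
      -- determinant
      have hXdet : X.det = 1 := by
        rw [hXdef]
        rw [show ((F1 * M * F2).submatrix ⇑eS.symm ⇑eS.symm).det = (F1 * M * F2).det from
          Matrix.det_submatrix_equiv_self eS.symm _]
        rw [Matrix.det_mul, Matrix.det_mul]
        have hdF1 : F1.det = 1 := by
          rw [hF1, Matrix.det_fromBlocks_zero₂₁]
          simp [hG1, Rot_det]
        have hdF2 : F2.det = 1 := by
          rw [hF2, Matrix.det_fromBlocks_zero₂₁]
          simp [hG2, Rot_det]
        have hdM : M.det = 1 := by
          rw [hMdef, Matrix.det_submatrix_equiv_self, hA1def,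
            Matrix.det_submatrix_equiv_self, Matrix.det_fromBlocks_zero₂₁]
          simp [hX'd]
        rw [hdF1, hdF2, hdM]; ring
      refine ⟨X, ⟨hXorth, hXdet⟩, ?_⟩
      -- diagonal
      funext i
      obtain ⟨j, rfl⟩ : ∃ j, eS j = i := ⟨eS.symm i, by simp⟩
      have hXentry : Matrix.diag X (eS j) = (F1 * M * F2) j j := by
        simp [Matrix.diag, hXdef]
      rw [hXentry, hXblocks]
      cases j with
      | inl i0 =>
        have h1 : fromBlocks M.toBlocks₁₁ (M.toBlocks₁₂ * G2) (G1 * M.toBlocks₂₁)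
            (G1 * M.toBlocks₂₂ * G2) (Sum.inl i0) (Sum.inl i0) = M (Sum.inl i0) (Sum.inl i0) := rfl
        rw [h1, hM11, hdiagX']
        have hidx : eS (Sum.inl i0) = i0.castSucc.castSucc := by
          apply Fin.ext; simp [heS]
        rw [hidx]
        simp only [Finset.sum_apply, Pi.smul_apply, smul_eq_mul]
        apply Finset.sum_congr rfl
        intro k hk
        congr 1
        simp only [hz'def, Fin.snoc_castSucc]
      | inr j0 =>
        have h1 : fromBlocks M.toBlocks₁₁ (M.toBlocks₁₂ * G2) (G1 * M.toBlocks₂₁)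
            (G1 * M.toBlocks₂₂ * G2) (Sum.inr j0) (Sum.inr j0) =
            (G1 * M.toBlocks₂₂ * G2) j0 j0 := rfl
        rw [h1, hB22]
        fin_cases j0
        · show (G1 * !![s, 0; 0, 1] * G2) 0 0 = (∑ k ∈ t, w k • z k) (eS (Sum.inr 0))
          have hidx : eS (Sum.inr (0 : Fin 2)) = a := by apply Fin.ext; simp [heS, ha]
          rw [hidx]
          have he : (G1 * !![s, 0; 0, 1] * G2) 0 0 =
              s * (Real.cos α * Real.cos β) - Real.sin α * Real.sin β := by
            simp [hG1, hG2, Rot, Matrix.mul_apply, Fin.sum_univ_two]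
            ring
          rw [he, hu, hv]
          have hgoal : (∑ k ∈ t, w k • z k) a = p := by
            simp [hp, Finset.sum_apply]
          rw [hgoal]
          linarith [hA1, hB1]
        · show (G1 * !![s, 0; 0, 1] * G2) 1 1 = (∑ k ∈ t, w k • z k) (eS (Sum.inr 1))
          have hidx : eS (Sum.inr (1 : Fin 2)) = b := by apply Fin.ext; simp [heS, hb]
          rw [hidx]
          have he : (G1 * !![s, 0; 0, 1] * G2) 1 1 =
              Real.cos α * Real.cos β - s * (Real.sin α * Real.sin β) := by
            simp [hG1, hG2, Rot, Matrix.mul_apply, Fin.sum_univ_two]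
            ring
          rw [he, hu, hv]
          have hgoal : (∑ k ∈ t, w k • z k) b = q := by
            simp [hq, Finset.sum_apply]
          rw [hgoal]
          linarith [hA1, hB1]

/-- Every point of the parity polytope is the diagonal of some `X ∈ SO(n)`. -/
theorem exists_so_matrix_with_diag (n : ℕ) (d : Fin n → ℝ)
    (hd : d ∈ parityPolytope n) :
    ∃ X ∈ SpecialOrthogonal n, Matrix.diag X = d := by
  rw [parityPolytope, convexHull_eq] at hd
  obtain ⟨ι, t, w, z, h0, h1, hmem, hx⟩ := hd
  rw [← hx, Finset.centerMass_eq_of_sum_1 t z h1]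
  exact key n ι t w z h0 h1 hmem
end

section
/- For n ≥ 3, the linear map π : ℝ^{n×n} → ℝ³ given by π(X) = (X_{11}, X_{12}, Σ_{i=3}^n X_{ii}) maps SO(n) to a nonconvex set. In particular, the intersection of π(SO(n)) with the plane {x ∈ ℝ³ : x₃ = n−2} equals the circle {(cos θ, sin θ, n−2) : θ ∈ [0, 2π)}, which is not convex. -/
open Matrix

lemma circle_not_convex (c : ℝ) :
    ¬ Convex ℝ {x : ℝ × ℝ × ℝ | ∃ θ : ℝ, x = (Real.cos θ, Real.sin θ, c)} := by
  intro h
  have h1 : ((1:ℝ), (0:ℝ), c) ∈ {x : ℝ × ℝ × ℝ | ∃ θ : ℝ, x = (Real.cos θ, Real.sin θ, c)} :=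
    ⟨0, by simp⟩
  have h2 : ((-1:ℝ), (0:ℝ), c) ∈ {x : ℝ × ℝ × ℝ | ∃ θ : ℝ, x = (Real.cos θ, Real.sin θ, c)} :=
    ⟨Real.pi, by simp⟩
  have := h h1 h2 (a := 1/2) (b := 1/2) (by norm_num) (by norm_num) (by norm_num)
  obtain ⟨θ, hθ⟩ := this
  have hx : (0:ℝ) = Real.cos θ := by
    have := congrArg Prod.fst hθ
    simpa [Prod.smul_def] using this
  have hy : (0:ℝ) = Real.sin θ := by
    have := congrArg (fun p => p.2.1) hθ
    simpa [Prod.smul_def] using this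
  have := Real.sin_sq_add_cos_sq θ
  rw [← hx, ← hy] at this
  norm_num at this

lemma card_filter_ge_two (n : ℕ) (hn : 3 ≤ n) :
    (Finset.univ.filter (fun i : Fin n => 2 ≤ i.val)).card = n - 2 := by
  have h2 : (Finset.univ.filter (fun i : Fin n => ¬ 2 ≤ i.val))
      = {(⟨0, by omega⟩ : Fin n), ⟨1, by omega⟩} := by
    ext i
    simp [Fin.ext_iff]
    omega
  have h3 := Finset.card_filter_add_card_filter_not
    (s := (Finset.univ : Finset (Fin n))) (p := fun i : Fin n => 2 ≤ i.val)
  rw [h2] at h3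
  have h4 : ({(⟨0, by omega⟩ : Fin n), ⟨1, by omega⟩} : Finset (Fin n)).card = 2 := by
    rw [Finset.card_insert_of_notMem (by simp [Fin.ext_iff]), Finset.card_singleton]
  rw [h4, Finset.card_univ, Fintype.card_fin] at h3
  omega


lemma three_le_zero_lt {n : ℕ} (hn : 3 ≤ n) : 0 < n := by omega

lemma three_le_one_lt {n : ℕ} (hn : 3 ≤ n) : 1 < n := by omega

noncomputable def rotA (θ : ℝ) : Matrix (Fin 2) (Fin 2) ℝ :=
  !![Real.cos θ, Real.sin θ; -Real.sin θ, Real.cos θ]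

noncomputable def rotMat (n : ℕ) (hn : 3 ≤ n) (θ : ℝ) : Matrix (Fin n) (Fin n) ℝ :=
  Matrix.reindex (finSumFinEquiv.trans (finCongr (by omega)))
    (finSumFinEquiv.trans (finCongr (by omega)))
    (Matrix.fromBlocks (rotA θ) 0 0 (1 : Matrix (Fin (n-2)) (Fin (n-2)) ℝ))

lemma rotA_mem (θ : ℝ) : (rotA θ)ᵀ * rotA θ = 1 ∧ (rotA θ).det = 1 := by
  constructor
  · have ht : (rotA θ)ᵀ = !![Real.cos θ, -Real.sin θ; Real.sin θ, Real.cos θ] := by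
      ext i j; fin_cases i <;> fin_cases j <;> rfl
    rw [ht]
    ext i j
    fin_cases i <;> fin_cases j <;>
      simp [rotA, Matrix.mul_apply, Fin.sum_univ_two, Matrix.one_apply] <;>
      nlinarith [Real.sin_sq_add_cos_sq θ]
  · simp [rotA, Matrix.det_fin_two_of]
    ring_nf
    rw [add_comm]
    exact Real.sin_sq_add_cos_sq θ

lemma rotMat_mem (n : ℕ) (hn : 3 ≤ n) (θ : ℝ) :
    (rotMat n hn θ)ᵀ * rotMat n hn θ = 1 ∧ (rotMat n hn θ).det = 1 := by
  obtain ⟨h1, h2⟩ := rotA_mem θ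
  constructor
  · unfold rotMat
    rw [Matrix.transpose_reindex]
    simp only [Matrix.reindex_apply, Matrix.submatrix_mul_equiv]
    rw [Matrix.fromBlocks_transpose, Matrix.fromBlocks_multiply]
    simp [h1, Matrix.fromBlocks_one]
    exact Matrix.submatrix_one_equiv ((finCongr _).trans finSumFinEquiv.symm)
  · unfold rotMat
    rw [Matrix.det_reindex_self, Matrix.det_fromBlocks_zero₂₁]
    simp [h2]

lemma rotMat_symm_lt (n : ℕ) (hn : 3 ≤ n) (j : Fin 2) :
    (finSumFinEquiv.trans (finCongr (by omega : 2 + (n - 2) = n))).symm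
      ⟨j.val, by omega⟩ = Sum.inl j := by
  rw [Equiv.symm_apply_eq]
  simp [Fin.ext_iff]

lemma rotMat_symm_ge (n : ℕ) (hn : 3 ≤ n) (i : Fin n) (hi : 2 ≤ i.val) :
    (finSumFinEquiv.trans (finCongr (by omega : 2 + (n - 2) = n))).symm
      i = Sum.inr ⟨i.val - 2, by omega⟩ := by
  rw [Equiv.symm_apply_eq]
  simp [Fin.ext_iff]
  omega

lemma rotMat_e00 (n : ℕ) (hn : 3 ≤ n) (θ : ℝ) :
    rotMat n hn θ ⟨0, three_le_zero_lt hn⟩ ⟨0, three_le_zero_lt hn⟩ = Real.cos θ := by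
  unfold rotMat
  simp only [Matrix.reindex_apply, Matrix.submatrix_apply]
  rw [show ((⟨0, by omega⟩ : Fin n)) = ⟨(0 : Fin 2).val, by omega⟩ from rfl,
    rotMat_symm_lt n hn 0]
  rfl

lemma rotMat_e01 (n : ℕ) (hn : 3 ≤ n) (θ : ℝ) :
    rotMat n hn θ ⟨0, three_le_zero_lt hn⟩ ⟨1, three_le_one_lt hn⟩ = Real.sin θ := by
  unfold rotMat
  simp only [Matrix.reindex_apply, Matrix.submatrix_apply]
  rw [show ((⟨0, by omega⟩ : Fin n)) = ⟨(0 : Fin 2).val, by omega⟩ from rfl,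
    show ((⟨1, by omega⟩ : Fin n)) = ⟨(1 : Fin 2).val, by omega⟩ from rfl,
    rotMat_symm_lt n hn 0, rotMat_symm_lt n hn 1]
  rfl

lemma rotMat_diag (n : ℕ) (hn : 3 ≤ n) (θ : ℝ) (i : Fin n) (hi : 2 ≤ i.val) :
    rotMat n hn θ i i = 1 := by
  unfold rotMat
  simp only [Matrix.reindex_apply, Matrix.submatrix_apply]
  rw [rotMat_symm_ge n hn i hi]
  simp [Matrix.fromBlocks, Matrix.one_apply]

lemma so_plane_sub (n : ℕ) (hn : 3 ≤ n) (X : Matrix (Fin n) (Fin n) ℝ)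
    (hX : Xᵀ * X = 1)
    (hsum : ∑ i ∈ Finset.univ.filter (fun i : Fin n => 2 ≤ i.val), X i i = (n : ℝ) - 2) :
    ∃ θ : ℝ, X ⟨0, three_le_zero_lt hn⟩ ⟨0, three_le_zero_lt hn⟩ = Real.cos θ ∧
      X ⟨0, three_le_zero_lt hn⟩ ⟨1, three_le_one_lt hn⟩ = Real.sin θ := by
  have hcard : (Finset.univ.filter (fun i : Fin n => 2 ≤ i.val)).card = n - 2 :=
    card_filter_ge_two n hn
  have col : ∀ j : Fin n, ∑ k, X k j ^ 2 = 1 := by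
    intro j
    have h := congrFun (congrFun hX j) j
    simpa [Matrix.mul_apply, Matrix.transpose_apply, Matrix.one_apply, sq] using h
  have diag_le : ∀ j : Fin n, X j j ≤ 1 := by
    intro j
    have h1 : X j j ^ 2 ≤ 1 := by
      rw [← col j]
      exact Finset.single_le_sum (f := fun k => X k j ^ 2)
        (fun k _ => sq_nonneg _) (Finset.mem_univ j)
    nlinarith
  have diag_eq : ∀ i ∈ Finset.univ.filter (fun i : Fin n => 2 ≤ i.val), X i i = 1 := by
    have hz : ∑ i ∈ Finset.univ.filter (fun i : Fin n => 2 ≤ i.val), (1 - X i i) = 0 := by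
      rw [Finset.sum_sub_distrib, Finset.sum_const, hcard, hsum]
      have : ((n - 2 : ℕ) : ℝ) = (n : ℝ) - 2 := by
        push_cast [Nat.cast_sub (by omega : 2 ≤ n)]; ring
      simp [this]
    intro i hi
    have := (Finset.sum_eq_zero_iff_of_nonneg
      (fun j hj => by linarith [diag_le j])).mp hz i hi
    linarith
  have col_unit : ∀ i : Fin n, 2 ≤ i.val → ∀ k, k ≠ i → X k i = 0 := by
    intro i hi k hk
    have hXii : X i i = 1 := diag_eq i (by simp [hi])
    have h1 : ∑ k ∈ Finset.univ.erase i, X k i ^ 2 = 0 := by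
      have h2 := Finset.add_sum_erase Finset.univ (fun k => X k i ^ 2) (Finset.mem_univ i)
      have h2' : X i i ^ 2 + ∑ x ∈ Finset.univ.erase i, X x i ^ 2 = 1 := by
        rw [h2]; exact col i
      rw [hXii] at h2'
      linarith
    have := (Finset.sum_eq_zero_iff_of_nonneg
      (fun j _ => sq_nonneg (X j i))).mp h1 k (Finset.mem_erase.mpr ⟨hk, Finset.mem_univ k⟩)
    exact pow_eq_zero_iff (by norm_num) |>.mp this
  have hXXt : X * Xᵀ = 1 := mul_eq_one_comm.mp hX
  set i0 : Fin n := ⟨0, by omega⟩ with hi0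
  set i1 : Fin n := ⟨1, by omega⟩ with hi1
  have row0 : ∑ k, X i0 k ^ 2 = 1 := by
    have h := congrFun (congrFun hXXt i0) i0
    simpa [Matrix.mul_apply, Matrix.transpose_apply, Matrix.one_apply, sq] using h
  have hpair : X i0 i0 ^ 2 + X i0 i1 ^ 2 = 1 := by
    have hsub : ∑ k ∈ ({i0, i1} : Finset (Fin n)), X i0 k ^ 2 = ∑ k, X i0 k ^ 2 := by
      apply Finset.sum_subset (Finset.subset_univ _)
      intro x _ hx
      have hx2 : 2 ≤ x.val := by
        simp [hi0, hi1, Fin.ext_iff] at hx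
        omega
      rw [col_unit x hx2 i0 (by simp [hi0, Fin.ext_iff]; omega)]
      norm_num
    rw [row0] at hsub
    rw [← hsub, Finset.sum_pair (by simp [hi0, hi1, Fin.ext_iff])]
  set x := X i0 i0
  set y := X i0 i1
  set z : ℂ := ⟨x, y⟩ with hz
  have habs : ‖z‖ = 1 := by
    rw [Complex.norm_def, Complex.normSq_mk]
    rw [show x * x + y * y = 1 by nlinarith]
    exact Real.sqrt_one
  have hz0 : z ≠ 0 := by
    intro h; rw [h] at habs; simp at habs
  refine ⟨z.arg, ?_, ?_⟩
  · rw [Complex.cos_arg hz0, habs]; simp [hz]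
  · rw [Complex.sin_arg, habs]; simp [hz]
/-- For `n ≥ 3`, the linear map `X ↦ (X₁₁, X₁₂, ∑_{i≥3} X_{ii})` maps `SO(n)`
to a nonconvex set; its intersection with the plane `x₃ = n - 2` is the
circle `{(cos θ, sin θ, n-2)}`, which is not convex. -/
theorem three_dim_image_so_nonconvex (n : ℕ) (hn : 3 ≤ n) :
    ¬ Convex ℝ ((fun X : Matrix (Fin n) (Fin n) ℝ =>
        (X ⟨0, by omega⟩ ⟨0, by omega⟩, X ⟨0, by omega⟩ ⟨1, by omega⟩,
          ∑ i ∈ Finset.univ.filter (fun i : Fin n => 2 ≤ i.val), X i i))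
        '' SpecialOrthogonal n) ∧
    ((fun X : Matrix (Fin n) (Fin n) ℝ =>
        (X ⟨0, by omega⟩ ⟨0, by omega⟩, X ⟨0, by omega⟩ ⟨1, by omega⟩,
          ∑ i ∈ Finset.univ.filter (fun i : Fin n => 2 ≤ i.val), X i i))
        '' SpecialOrthogonal n) ∩ {x : ℝ × ℝ × ℝ | x.2.2 = (n : ℝ) - 2} =
      {x : ℝ × ℝ × ℝ | ∃ θ : ℝ, x = (Real.cos θ, Real.sin θ, (n : ℝ) - 2)} ∧
    ¬ Convex ℝ {x : ℝ × ℝ × ℝ | ∃ θ : ℝ, x = (Real.cos θ, Real.sin θ, (n : ℝ) - 2)} := by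
  have hcard := card_filter_ge_two n hn
  have hcast : ((n - 2 : ℕ) : ℝ) = (n : ℝ) - 2 := by
    push_cast [Nat.cast_sub (by omega : 2 ≤ n)]; ring
  have heq : ((fun X : Matrix (Fin n) (Fin n) ℝ =>
        (X ⟨0, by omega⟩ ⟨0, by omega⟩, X ⟨0, by omega⟩ ⟨1, by omega⟩,
          ∑ i ∈ Finset.univ.filter (fun i : Fin n => 2 ≤ i.val), X i i))
        '' SpecialOrthogonal n) ∩ {x : ℝ × ℝ × ℝ | x.2.2 = (n : ℝ) - 2} =
      {x : ℝ × ℝ × ℝ | ∃ θ : ℝ, x = (Real.cos θ, Real.sin θ, (n : ℝ) - 2)} := by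
    ext p
    constructor
    · rintro ⟨⟨X, ⟨hXo, hXd⟩, hXeq⟩, hplane⟩
      have hp3 : p.2.2 = (n : ℝ) - 2 := hplane
      have hsum : ∑ i ∈ Finset.univ.filter (fun i : Fin n => 2 ≤ i.val), X i i
          = (n : ℝ) - 2 := by
        have := congrArg (fun q : ℝ × ℝ × ℝ => q.2.2) hXeq
        simpa using this.trans hp3
      obtain ⟨θ, hc, hs⟩ := so_plane_sub n hn X hXo hsum
      refine ⟨θ, ?_⟩
      rw [← hXeq]
      simp only [Prod.mk.injEq]
      exact ⟨hc, hs, hsum⟩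
    · rintro ⟨θ, rfl⟩
      refine ⟨⟨rotMat n hn θ, rotMat_mem n hn θ, ?_⟩, by simp⟩
      have hsum : ∑ i ∈ Finset.univ.filter (fun i : Fin n => 2 ≤ i.val),
          rotMat n hn θ i i = (n : ℝ) - 2 := by
        rw [Finset.sum_congr rfl (fun i hi => rotMat_diag n hn θ i (by
          simpa using hi)), Finset.sum_const, hcard]
        simp [hcast]
      simp only [Prod.mk.injEq]
      exact ⟨rotMat_e00 n hn θ, rotMat_e01 n hn θ, hsum⟩
  have hcirc := circle_not_convex ((n : ℝ) - 2)
  refine ⟨?_, heq, hcirc⟩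
  intro hconv
  have hplaneconv : Convex ℝ {x : ℝ × ℝ × ℝ | x.2.2 = (n : ℝ) - 2} := by
    intro p hp q hq a b ha hb hab
    simp only [Set.mem_setOf_eq] at *
    simp only [Prod.snd_add, Prod.smul_snd, smul_eq_mul, hp, hq]
    linear_combination ((n : ℝ) - 2) * hab
  exact hcirc (heq ▸ hconv.inter hplaneconv)
end

section
/- If π : ℝ^{n×n} → ℝ^m is a linear map of rank greater than n(n−1)/2 and n ≥ 3, then π(SO(n)) is not convex. -/
open Matrix

open Set

attribute [local instance] Matrix.normedAddCommGroup Matrix.normedSpace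

variable {n : ℕ} {E : Type*} [NormedAddCommGroup E] [NormedSpace ℝ E]

theorem ContDiff.matrix_elem {A : E → Matrix (Fin n) (Fin n) ℝ} (hA : ContDiff ℝ 1 A)
    (i j : Fin n) : ContDiff ℝ 1 fun x => A x i j :=
  ((contDiff_pi.1 ((contDiff_pi.1 hA) i)) j)

theorem contDiff_matrix {A : E → Matrix (Fin n) (Fin n) ℝ}
    (h : ∀ i j, ContDiff ℝ 1 fun x => A x i j) : ContDiff ℝ 1 A :=
  contDiff_pi.2 fun i => contDiff_pi.2 fun j => h i j

theorem ContDiff.matrix_mul {A B : E → Matrix (Fin n) (Fin n) ℝ} (hA : ContDiff ℝ 1 A)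
    (hB : ContDiff ℝ 1 B) : ContDiff ℝ 1 fun x => A x * B x := by
  refine contDiff_matrix fun i j => ?_
  simp only [Matrix.mul_apply]
  exact ContDiff.sum fun k _ => (hA.matrix_elem i k).mul (hB.matrix_elem k j)

theorem ContDiff.matrix_det {A : E → Matrix (Fin n) (Fin n) ℝ} (hA : ContDiff ℝ 1 A) :
    ContDiff ℝ 1 fun x => (A x).det := by
  simp_rw [Matrix.det_apply']
  refine ContDiff.sum fun σ _ => ContDiff.mul contDiff_const ?_
  exact contDiff_prod fun k _ => hA.matrix_elem _ _

theorem ContDiff.matrix_transpose {A : E → Matrix (Fin n) (Fin n) ℝ} (hA : ContDiff ℝ 1 A) :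
    ContDiff ℝ 1 fun x => (A x)ᵀ :=
  contDiff_matrix fun i j => hA.matrix_elem j i

theorem ContDiff.matrix_updateColumn {A : E → Matrix (Fin n) (Fin n) ℝ} (hA : ContDiff ℝ 1 A)
    (k : Fin n) (c : Fin n → ℝ) : ContDiff ℝ 1 fun x => (A x).updateCol k c := by
  refine contDiff_matrix fun i j => ?_
  rcases eq_or_ne j k with rfl | hj
  · simpa [Matrix.updateCol_apply] using contDiff_const
  · simpa [Matrix.updateCol_apply, hj] using hA.matrix_elem i j

theorem ContDiff.matrix_updateRow {A : E → Matrix (Fin n) (Fin n) ℝ} (hA : ContDiff ℝ 1 A)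
    (k : Fin n) (c : Fin n → ℝ) : ContDiff ℝ 1 fun x => (A x).updateRow k c := by
  refine contDiff_matrix fun i j => ?_
  rcases eq_or_ne i k with rfl | hi
  · simpa [Matrix.updateRow_apply] using contDiff_const
  · simpa [Matrix.updateRow_apply, hi] using hA.matrix_elem i j

theorem ContDiff.matrix_adjugate {A : E → Matrix (Fin n) (Fin n) ℝ} (hA : ContDiff ℝ 1 A) :
    ContDiff ℝ 1 fun x => (A x).adjugate := by
  refine contDiff_matrix fun i j => ?_
  simp only [Matrix.adjugate_apply]
  exact (hA.matrix_updateRow j (Pi.single i 1)).matrix_det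

def skewSet (n : ℕ) : Set (Matrix (Fin n) (Fin n) ℝ) := {A | Aᵀ = -A}

noncomputable def cay {n : ℕ} (A : Matrix (Fin n) (Fin n) ℝ) : Matrix (Fin n) (Fin n) ℝ :=
  (1 - A) * (1 + A)⁻¹

theorem det_one_add_skew_ne_zero {n : ℕ} {A : Matrix (Fin n) (Fin n) ℝ} (hA : A ∈ skewSet n) :
    (1 + A).det ≠ 0 := by
  intro h0
  obtain ⟨x, hx0, hx⟩ := (Matrix.exists_mulVec_eq_zero_iff).2 h0
  rw [Matrix.add_mulVec, Matrix.one_mulVec] at hx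
  have hAx : A *ᵥ x = -x := by linear_combination (norm := module) hx
  have h1 : x ⬝ᵥ (A *ᵥ x) = -(x ⬝ᵥ x) := by rw [hAx]; simp
  have h2 : x ⬝ᵥ (A *ᵥ x) = x ⬝ᵥ x := by
    rw [Matrix.dotProduct_mulVec, ← Matrix.mulVec_transpose, hA]
    simp [Matrix.neg_mulVec, hAx]
  have : x ⬝ᵥ x = 0 := by linarith [h1.symm.trans h2]
  exact hx0 (dotProduct_self_eq_zero.1 this)

theorem contDiffOn_cay {n : ℕ} : ContDiffOn ℝ 1 cay (skewSet n) := by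
  have hrew : (cay : Matrix (Fin n) (Fin n) ℝ → _) =
      fun B => ((1 + B).det)⁻¹ • ((1 - B) * (1 + B).adjugate) := by
    funext B
    rw [cay, Matrix.inv_def, Ring.inverse_eq_inv', Matrix.mul_smul]
  rw [hrew]
  intro A hA
  apply ContDiffAt.contDiffWithinAt
  have h1B : ContDiff ℝ 1 fun B : Matrix (Fin n) (Fin n) ℝ => 1 + B :=
    contDiff_const.add contDiff_id
  have hdet : ContDiff ℝ 1 fun B : Matrix (Fin n) (Fin n) ℝ => (1 + B).det :=
    h1B.matrix_det
  refine ContDiffAt.smul (f := fun B : Matrix (Fin n) (Fin n) ℝ => ((1 + B).det)⁻¹)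
    (g := fun B : Matrix (Fin n) (Fin n) ℝ => (1 - B) * (1 + B).adjugate) ?_ ?_
  · exact (contDiffAt_inv ℝ (det_one_add_skew_ne_zero hA)).comp A hdet.contDiffAt
  · exact (((contDiff_const.sub contDiff_id).matrix_mul h1B.matrix_adjugate)).contDiffAt

theorem exists_cay {n : ℕ} {R X : Matrix (Fin n) (Fin n) ℝ} (hR : R ∈ SpecialOrthogonal n)
    (hX : X ∈ SpecialOrthogonal n) (hdet : (1 + Rᵀ * X).det ≠ 0) :
    ∃ A ∈ skewSet n, X = R * cay A := by
  set Y := Rᵀ * X with hYdef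
  have hRR : R * Rᵀ = 1 := mul_eq_one_comm.1 hR.1
  have hYY : Yᵀ * Y = 1 := by
    rw [hYdef, Matrix.transpose_mul, Matrix.transpose_transpose, Matrix.mul_assoc,
      ← Matrix.mul_assoc R, hRR, Matrix.one_mul, hX.1]
  have hB : IsUnit (1 + Y).det := isUnit_iff_ne_zero.2 hdet
  have hBt : IsUnit ((1 + Y)ᵀ).det := by rwa [Matrix.det_transpose]
  have hBt' : IsUnit ((1 + Yᵀ)).det := by
    rw [show (1 : Matrix (Fin n) (Fin n) ℝ) + Yᵀ = (1 + Y)ᵀ by simp]; exact hBt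
  refine ⟨(1 - Y) * (1 + Y)⁻¹, ?_, ?_⟩
  · -- skewness
    have key : (1 - Yᵀ) * (1 + Y) = (1 + Y)ᵀ * (Y - 1) := by
      rw [Matrix.transpose_add, Matrix.transpose_one]
      have expand : (1 - Yᵀ) * (1 + Y) = 1 + Y - Yᵀ - Yᵀ * Y := by noncomm_ring
      have expand2 : (1 + Yᵀ) * (Y - 1) = Y - 1 + Yᵀ * Y - Yᵀ := by noncomm_ring
      rw [expand, expand2, hYY]
      abel
    show ((1 - Y) * (1 + Y)⁻¹)ᵀ = -((1 - Y) * (1 + Y)⁻¹)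
    have cancel : ∀ a b : Matrix (Fin n) (Fin n) ℝ,
        (1 + Y)ᵀ * a * (1 + Y) = (1 + Y)ᵀ * b * (1 + Y) → a = b := by
      intro a b h
      have h2 := congrArg (fun Z => ((1 + Y)ᵀ)⁻¹ * Z * (1 + Y)⁻¹) h
      simpa [Matrix.mul_assoc, Matrix.mul_nonsing_inv _ hB,
        Matrix.nonsing_inv_mul_cancel_left _ _ hBt'] using h2
    rw [Matrix.transpose_mul, Matrix.transpose_nonsing_inv, Matrix.transpose_sub,
      Matrix.transpose_one]
    apply cancel
    rw [Matrix.mul_nonsing_inv_cancel_left _ _ hBt]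
    have : (1 + Y)ᵀ * -((1 - Y) * (1 + Y)⁻¹) * (1 + Y)
        = -((1 + Y)ᵀ * (1 - Y)) * ((1 + Y)⁻¹ * (1 + Y)) := by noncomm_ring
    rw [this, Matrix.nonsing_inv_mul _ hB, Matrix.mul_one, key]
    noncomm_ring
  · -- X = R * cay A
    have h1A : 1 + (1 - Y) * (1 + Y)⁻¹ = (2 : ℝ) • (1 + Y)⁻¹ := by
      have hsum : ((1 + Y) + (1 - Y)) = (2 : ℝ) • (1 : Matrix (Fin n) (Fin n) ℝ) := by
        rw [two_smul]; abel
      calc 1 + (1 - Y) * (1 + Y)⁻¹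
          = (1 + Y) * (1 + Y)⁻¹ + (1 - Y) * (1 + Y)⁻¹ := by
            rw [Matrix.mul_nonsing_inv _ hB]
        _ = ((1 + Y) + (1 - Y)) * (1 + Y)⁻¹ := by rw [Matrix.add_mul]; noncomm_ring
        _ = (2 : ℝ) • (1 + Y)⁻¹ := by rw [hsum, Matrix.smul_mul, Matrix.one_mul]
    have h1S : 1 - (1 - Y) * (1 + Y)⁻¹ = (2 : ℝ) • (Y * (1 + Y)⁻¹) := by
      have hsum : ((1 + Y) - (1 - Y)) = (2 : ℝ) • Y := by rw [two_smul]; abel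
      calc 1 - (1 - Y) * (1 + Y)⁻¹
          = (1 + Y) * (1 + Y)⁻¹ - (1 - Y) * (1 + Y)⁻¹ := by
            rw [Matrix.mul_nonsing_inv _ hB]
        _ = ((1 + Y) - (1 - Y)) * (1 + Y)⁻¹ := by rw [Matrix.sub_mul]; noncomm_ring
        _ = (2 : ℝ) • (Y * (1 + Y)⁻¹) := by rw [hsum, Matrix.smul_mul]
    have hAunit : IsUnit (1 + (1 - Y) * (1 + Y)⁻¹).det := by
      rw [h1A, Matrix.det_smul, Matrix.det_nonsing_inv, Ring.inverse_eq_inv']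
      exact isUnit_iff_ne_zero.2 (mul_ne_zero (pow_ne_zero _ two_ne_zero) (inv_ne_zero hdet))
    have hkey : 1 - (1 - Y) * (1 + Y)⁻¹ = Y * (1 + (1 - Y) * (1 + Y)⁻¹) := by
      rw [h1A, h1S, Matrix.mul_smul]
    have hcay : cay ((1 - Y) * (1 + Y)⁻¹) = Y := by
      rw [cay, hkey, Matrix.mul_assoc, Matrix.mul_nonsing_inv _ hAunit, Matrix.mul_one]
    rw [hcay, hYdef, ← Matrix.mul_assoc, hRR, Matrix.one_mul]

def skewSub (n : ℕ) : Submodule ℝ (Matrix (Fin n) (Fin n) ℝ) where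
  carrier := skewSet n
  add_mem' := by
    intro a b ha hb
    show (a + b)ᵀ = -(a + b)
    rw [Matrix.transpose_add, ha, hb]; abel
  zero_mem' := by show (0 : Matrix (Fin n) (Fin n) ℝ)ᵀ = -0; simp
  smul_mem' := by
    intro c a ha
    show (c • a)ᵀ = -(c • a)
    rw [Matrix.transpose_smul, ha]; module

theorem finrank_skew_le (n : ℕ) : Module.finrank ℝ (skewSub n) ≤ n * (n - 1) / 2 := by
  classical
  let L : skewSub n →ₗ[ℝ] ((Σ i : Fin n, Fin i.1) → ℝ) :=
    { toFun := fun A p => (A : Matrix (Fin n) (Fin n) ℝ) p.1 ⟨p.2.1, p.2.2.trans p.1.2⟩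
      map_add' := by intro a b; rfl
      map_smul' := by intro c a; rfl }
  have hinj : Function.Injective L := by
    rw [← LinearMap.ker_eq_bot, Submodule.eq_bot_iff]
    intro A hA
    have hlow : ∀ (i j : Fin n), j < i → (A : Matrix (Fin n) (Fin n) ℝ) i j = 0 := by
      intro i j hji
      have := congrFun (hA : L A = 0) ⟨i, ⟨j.1, hji⟩⟩
      exact this
    have hskew : (A : Matrix (Fin n) (Fin n) ℝ)ᵀ = -(A : Matrix (Fin n) (Fin n) ℝ) := A.2
    have : (A : Matrix (Fin n) (Fin n) ℝ) = 0 := by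
      ext i j
      rcases lt_trichotomy i j with h | h | h
      · have h2 := congrFun (congrFun hskew j) i
        simp only [Matrix.transpose_apply, Matrix.neg_apply] at h2
        rw [show (A : Matrix (Fin n) (Fin n) ℝ) i j = -(A : Matrix (Fin n) (Fin n) ℝ) j i by
          rw [← h2]]
        rw [hlow j i h]; simp
      · subst h
        have h2 := congrFun (congrFun hskew i) i
        simp only [Matrix.transpose_apply, Matrix.neg_apply] at h2
        simpa using by linarith
      · simp [hlow i j h]
    exact Subtype.ext this
  calc Module.finrank ℝ (skewSub n) ≤ Module.finrank ℝ ((Σ i : Fin n, Fin i.1) → ℝ) :=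
        LinearMap.finrank_le_finrank_of_injective hinj
    _ = Fintype.card (Σ i : Fin n, Fin i.1) := Module.finrank_fintype_fun_eq_card ℝ
    _ = n * (n - 1) / 2 := by
        rw [Fintype.card_sigma]
        simp only [Fintype.card_fin]
        rw [Fin.sum_univ_eq_sum_range (fun i => i) n, Finset.sum_range_id]

theorem dimH_skewSet_le (n : ℕ) : dimH (skewSet n) ≤ (n * (n - 1) / 2 : ℕ) := by
  classical
  set d' := Module.finrank ℝ (skewSub n) with hd'
  let b := Module.finBasis ℝ (skewSub n)
  let L : (Fin d' → ℝ) →ₗ[ℝ] Matrix (Fin n) (Fin n) ℝ :=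
    (skewSub n).subtype ∘ₗ (b.equivFun.symm : (Fin d' → ℝ) ≃ₗ[ℝ] skewSub n).toLinearMap
  let Lc := LinearMap.toContinuousLinearMap L
  have hsub : skewSet n ⊆ Set.range ⇑Lc := by
    intro A hA
    refine ⟨b.equivFun ⟨A, hA⟩, ?_⟩
    have : L (b.equivFun ⟨A, hA⟩) = A := by
      show ((skewSub n).subtype) (b.equivFun.symm (b.equivFun ⟨A, hA⟩)) = A
      rw [b.equivFun.symm_apply_apply]
      rfl
    exact this
  calc dimH (skewSet n) ≤ dimH (Set.range ⇑Lc) := dimH_mono hsub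
    _ ≤ dimH (Set.univ : Set (Fin d' → ℝ)) := Lc.lipschitz.dimH_range_le
    _ = d' := by rw [Real.dimH_univ_eq_finrank, Module.finrank_fintype_fun_eq_card,
        Fintype.card_fin]
    _ ≤ (n * (n - 1) / 2 : ℕ) := by exact_mod_cast Nat.cast_le.2 (finrank_skew_le n)

theorem dimH_image_SO_le {n k : ℕ} (φ : Matrix (Fin n) (Fin n) ℝ →ₗ[ℝ] (Fin k → ℝ)) :
    dimH (⇑φ '' SpecialOrthogonal n) ≤ (n * (n - 1) / 2 : ℕ) := by
  classical
  set u : SpecialOrthogonal n → Set (Matrix (Fin n) (Fin n) ℝ) :=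
    fun R => {X | (1 + (R : Matrix (Fin n) (Fin n) ℝ)ᵀ * X).det ≠ 0} with hu
  have hopen : ∀ R, IsOpen (u R) := by
    intro R
    have hc : Continuous fun X : Matrix (Fin n) (Fin n) ℝ =>
        (1 + (R : Matrix (Fin n) (Fin n) ℝ)ᵀ * X).det :=
      (continuous_const.add (continuous_const.matrix_mul continuous_id)).matrix_det
    exact isOpen_ne.preimage hc
  have hcov : SpecialOrthogonal n ⊆ ⋃ R, u R := by
    intro X hX
    refine Set.mem_iUnion.2 ⟨⟨X, hX⟩, ?_⟩
    show (1 + Xᵀ * X).det ≠ 0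
    rw [hX.1]
    have : (1 + 1 : Matrix (Fin n) (Fin n) ℝ) = (2 : ℝ) • 1 := by
      rw [two_smul]
    rw [this, Matrix.det_smul, Matrix.det_one, mul_one]
    exact pow_ne_zero _ two_ne_zero
  haveI : SecondCountableTopology (Matrix (Fin n) (Fin n) ℝ) :=
    inferInstanceAs (SecondCountableTopology (Fin n → Fin n → ℝ))
  obtain ⟨T, hTc, hTU⟩ := TopologicalSpace.isOpen_iUnion_countable u hopen
  have hcov2 : ⇑φ '' SpecialOrthogonal n ⊆
      ⋃ R ∈ T, ⇑φ '' (SpecialOrthogonal n ∩ u R) := by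
    rintro - ⟨X, hX, rfl⟩
    have : X ∈ ⋃ R ∈ T, u R := by rw [hTU]; exact hcov hX
    obtain ⟨R, hR, hXR⟩ := Set.mem_iUnion₂.1 this
    exact Set.mem_iUnion₂.2 ⟨R, hR, Set.mem_image_of_mem _ ⟨hX, hXR⟩⟩
  refine le_trans (dimH_mono hcov2) ?_
  rw [dimH_bUnion hTc]
  refine iSup₂_le fun R _ => ?_
  have hsub : ⇑φ '' (SpecialOrthogonal n ∩ u R) ⊆
      (fun A => φ ((R : Matrix (Fin n) (Fin n) ℝ) * cay A)) '' skewSet n := by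
    rintro - ⟨X, ⟨hX1, hX2⟩, rfl⟩
    obtain ⟨A, hA, hXA⟩ := exists_cay R.2 hX1 hX2
    exact ⟨A, hA, by rw [hXA]⟩
  refine le_trans (dimH_mono hsub) ?_
  have hconv : Convex ℝ (skewSet n) := (skewSub n).convex
  have hcd : ContDiffOn ℝ 1 (fun A => φ ((R : Matrix (Fin n) (Fin n) ℝ) * cay A))
      (skewSet n) := by
    have h1 : ContDiff ℝ 1 fun Z : Matrix (Fin n) (Fin n) ℝ =>
        φ ((R : Matrix (Fin n) (Fin n) ℝ) * Z) :=
      (LinearMap.toContinuousLinearMap φ).contDiff.comp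
        (contDiff_const.matrix_mul contDiff_id)
    exact h1.comp_contDiffOn contDiffOn_cay
  exact le_trans (hcd.dimH_image_le hconv Set.Subset.rfl) (dimH_skewSet_le n)

section SpanTop

variable {n : ℕ}

local notation "M" => Matrix (Fin n) (Fin n) ℝ
local notation "EE" => fun (i j : Fin n) => Matrix.single i j (1 : ℝ)

/-- sign vector flipping one coordinate -/
def sgn (i t : Fin n) : ℝ := if t = i then -1 else 1

lemma sgn_sq (i t : Fin n) : sgn i t * sgn i t = 1 := by
  unfold sgn; split_ifs <;> norm_num

lemma sgn_prod (i : Fin n) : ∏ t, sgn i t = -1 := by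
  unfold sgn
  rw [Finset.prod_ite_eq' Finset.univ i fun _ => (-1 : ℝ)]
  simp

theorem one_mem_SO : (1 : M) ∈ SpecialOrthogonal n := by
  constructor
  · rw [Matrix.transpose_one, Matrix.one_mul]
  · exact Matrix.det_one

theorem diag_mem_SO (v : Fin n → ℝ) (hv : ∀ i, v i * v i = 1) (hd : ∏ i, v i = 1) :
    Matrix.diagonal v ∈ SpecialOrthogonal n := by
  constructor
  · rw [Matrix.diagonal_transpose, Matrix.diagonal_mul_diagonal]
    have : (fun i => v i * v i) = fun _ => (1 : ℝ) := funext fun i => hv i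
    rw [this, Matrix.diagonal_one]
  · rw [Matrix.det_diagonal, hd]

theorem permMatrix_transpose_mul (σ : Equiv.Perm (Fin n)) :
    (σ.permMatrix ℝ)ᵀ * σ.permMatrix ℝ = 1 := by
  rw [← PEquiv.toMatrix_symm, ← Equiv.toPEquiv_symm, ← PEquiv.toMatrix_trans,
    ← Equiv.toPEquiv_trans, Equiv.symm_trans_self, Equiv.toPEquiv_refl, PEquiv.toMatrix_refl]

theorem diag_perm_mem_SO (v : Fin n → ℝ) (σ : Equiv.Perm (Fin n)) (hv : ∀ i, v i * v i = 1)
    (hd : (∏ i, v i) * ((Equiv.Perm.sign σ : ℤ) : ℝ) = 1) :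
    Matrix.diagonal v * σ.permMatrix ℝ ∈ SpecialOrthogonal n := by
  constructor
  · rw [Matrix.transpose_mul, Matrix.diagonal_transpose, Matrix.mul_assoc,
      ← Matrix.mul_assoc (Matrix.diagonal v), Matrix.diagonal_mul_diagonal]
    have : (fun i => v i * v i) = fun _ => (1 : ℝ) := funext fun i => hv i
    rw [this, Matrix.diagonal_one, Matrix.one_mul, permMatrix_transpose_mul]
  · rw [Matrix.det_mul, Matrix.det_diagonal, Matrix.det_permutation]
    exact_mod_cast hd

theorem permMatrix_apply (σ : Equiv.Perm (Fin n)) (a b : Fin n) :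
    σ.permMatrix ℝ a b = if σ a = b then 1 else 0 := by
  rw [Equiv.Perm.permMatrix, PEquiv.toMatrix_apply, Equiv.toPEquiv_apply]
  simp [Option.mem_def, eq_comm]

end SpanTop

section SpanTop2

variable {n : ℕ}

lemma sgn_self (i : Fin n) : sgn i i = -1 := if_pos rfl
lemma sgn_ne {i t : Fin n} (h : t ≠ i) : sgn i t = 1 := if_neg h

theorem pair_diag_mem (i j : Fin n) (hij : i ≠ j) :
    Matrix.single i i (1 : ℝ) + Matrix.single j j (1 : ℝ)
      ∈ vectorSpan ℝ (SpecialOrthogonal n) := by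
  classical
  set v : Fin n → ℝ := fun t => sgn i t * sgn j t with hvdef
  have hv : ∀ t, v t * v t = 1 := by
    intro t
    have h1 := sgn_sq i t
    have h2 := sgn_sq j t
    simp only [hvdef]
    nlinarith
  have hprod : ∏ t, v t = 1 := by
    rw [hvdef, Finset.prod_mul_distrib, sgn_prod, sgn_prod]; norm_num
  have hmem : (1 : Matrix (Fin n) (Fin n) ℝ) - Matrix.diagonal v
      ∈ vectorSpan ℝ (SpecialOrthogonal n) := by
    have := vsub_mem_vectorSpan ℝ (one_mem_SO (n := n)) (diag_mem_SO v hv hprod)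
    simpa [vsub_eq_sub] using this
  have key : (1 : Matrix (Fin n) (Fin n) ℝ) - Matrix.diagonal v
      = (2 : ℝ) • (Matrix.single i i (1 : ℝ) + Matrix.single j j (1 : ℝ)) := by
    ext a b
    simp only [Matrix.sub_apply, Matrix.one_apply, Matrix.diagonal_apply, Matrix.smul_apply,
      Matrix.add_apply, Matrix.single, Matrix.of_apply, hvdef, sgn, smul_eq_mul]
    rcases eq_or_ne a b with rfl | hab
    · rcases eq_or_ne a i with rfl | hai
      · simp [hij, Ne.symm hij]; norm_num
      · rcases eq_or_ne a j with rfl | haj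
        · simp [Ne.symm hij, hai, Ne.symm hai]; norm_num
        · simp [hai, haj, Ne.symm hai, Ne.symm haj]
    · have h1 : ¬(i = a ∧ i = b) := fun h => hab (h.1.symm.trans h.2)
      have h2 : ¬(j = a ∧ j = b) := fun h => hab (h.1.symm.trans h.2)
      simp [hab, h1, h2]
  rw [show Matrix.single i i (1 : ℝ) + Matrix.single j j (1 : ℝ)
      = (2⁻¹ : ℝ) • ((1 : Matrix (Fin n) (Fin n) ℝ) - Matrix.diagonal v) by
    rw [key, smul_smul]; norm_num]
  exact Submodule.smul_mem _ _ hmem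

theorem exists_third (hn : 3 ≤ n) (i j : Fin n) : ∃ k : Fin n, k ≠ i ∧ k ≠ j := by
  classical
  have hcard : ({i, j} : Finset (Fin n)).card < Fintype.card (Fin n) := by
    calc ({i, j} : Finset (Fin n)).card ≤ 2 :=
          (Finset.card_insert_le _ _).trans (by simp)
      _ < Fintype.card (Fin n) := by rw [Fintype.card_fin]; omega
  have hne : (({i, j} : Finset (Fin n))ᶜ).Nonempty := by
    rw [← Finset.card_pos, Finset.card_compl]
    omega
  obtain ⟨k, hk⟩ := hne
  rw [Finset.mem_compl, Finset.mem_insert, Finset.mem_singleton] at hk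
  exact ⟨k, fun h => hk (Or.inl h), fun h => hk (Or.inr h)⟩

end SpanTop2

section SpanTop3

variable {n : ℕ}

theorem diag_mem_V (hn : 3 ≤ n) (i : Fin n) :
    Matrix.single i i (1 : ℝ) ∈ vectorSpan ℝ (SpecialOrthogonal n) := by
  obtain ⟨j, hji, -⟩ := exists_third hn i i
  obtain ⟨k, hki, hkj⟩ := exists_third hn i j
  have h1 := pair_diag_mem i j (Ne.symm hji)
  have h2 := pair_diag_mem i k (Ne.symm hki)
  have h3 := pair_diag_mem j k (Ne.symm hkj)
  have key : Matrix.single i i (1 : ℝ) = (2⁻¹ : ℝ) •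
      ((Matrix.single i i (1 : ℝ) + Matrix.single j j (1 : ℝ))
        + (Matrix.single i i (1 : ℝ) + Matrix.single k k (1 : ℝ))
        - (Matrix.single j j (1 : ℝ) + Matrix.single k k (1 : ℝ))) := by
    module
  rw [key]
  exact Submodule.smul_mem _ _ (Submodule.sub_mem _ (Submodule.add_mem _ h1 h2) h3)

theorem offdiag_mem_V (hn : 3 ≤ n) (i j : Fin n) (hij : i ≠ j) :
    Matrix.single i j (1 : ℝ) ∈ vectorSpan ℝ (SpecialOrthogonal n) := by
  classical
  obtain ⟨k, hki, hkj⟩ := exists_third hn i j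
  set σ := Equiv.swap i j with hσ
  have hsign : ((Equiv.Perm.sign σ : ℤ) : ℝ) = -1 := by
    rw [hσ, Equiv.Perm.sign_swap hij]; norm_num
  have hX2 : Matrix.diagonal (sgn i) * σ.permMatrix ℝ ∈ SpecialOrthogonal n :=
    diag_perm_mem_SO _ _ (sgn_sq i) (by rw [sgn_prod, hsign]; norm_num)
  have hX3 : Matrix.diagonal (sgn k) * σ.permMatrix ℝ ∈ SpecialOrthogonal n :=
    diag_perm_mem_SO _ _ (sgn_sq k) (by rw [sgn_prod, hsign]; norm_num)
  have hmem : Matrix.diagonal (sgn i) * σ.permMatrix ℝ -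
      Matrix.diagonal (sgn k) * σ.permMatrix ℝ ∈ vectorSpan ℝ (SpecialOrthogonal n) := by
    have := vsub_mem_vectorSpan ℝ hX2 hX3
    simpa [vsub_eq_sub] using this
  have key : Matrix.diagonal (sgn i) * σ.permMatrix ℝ -
      Matrix.diagonal (sgn k) * σ.permMatrix ℝ
      = (2 : ℝ) • (Matrix.single k k (1 : ℝ) - Matrix.single i j (1 : ℝ)) := by
    ext a b
    rw [Matrix.sub_apply, Matrix.diagonal_mul, Matrix.diagonal_mul, permMatrix_apply]
    simp only [Matrix.smul_apply, Matrix.sub_apply, Matrix.single, Matrix.of_apply,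
      smul_eq_mul]
    rcases eq_or_ne a i with rfl | hai
    · rw [sgn_self, sgn_ne (Ne.symm hki)]
      have hswap : σ a = j := Equiv.swap_apply_left a j
      rcases eq_or_ne b j with rfl | hbj
      · rw [if_pos hswap]
        have h1 : ¬(k = a ∧ k = b) := fun h => hki h.1
        simp [h1]
        norm_num
      · rw [if_neg (fun h : σ a = b => hbj ((hswap.symm.trans h).symm))]
        have h1 : ¬(k = a ∧ k = b) := fun h => hki h.1
        have h2 : ¬(a = a ∧ j = b) := fun h => hbj h.2.symm
        have h3 : ¬(j = b) := fun h => hbj h.symm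
        simp [h1, h2, h3]
    · rw [sgn_ne hai]
      rcases eq_or_ne a k with hak | hak
      · rw [show sgn k a = -1 from if_pos hak]
        have haj : a ≠ j := fun h => hkj (hak.symm.trans h)
        have hswap : σ a = a := Equiv.swap_apply_of_ne_of_ne hai haj
        rcases eq_or_ne (σ a) b with hb | hb
        · rw [if_pos hb]
          have hba : b = a := hb.symm.trans hswap
          have h1a : k = a := hak.symm
          have h1b : k = b := hak.symm.trans hba.symm
          have h2 : ¬(i = a ∧ j = b) := fun h => hai h.1.symm
          have h3 : ¬(i = b ∧ j = b) := fun h => hij (h.1.trans h.2.symm)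
          simp [h1a, h1b, h2, hba.symm, h3]
          norm_num
        · rw [if_neg hb]
          have hba : b ≠ a := fun h => hb (hswap.trans h.symm)
          have h1 : ¬(k = a ∧ k = b) := fun h => hba (h.2.symm.trans h.1)
          have h2 : ¬(i = a ∧ j = b) := fun h => hai h.1.symm
          simp [h1, h2]
      · rw [show sgn k a = 1 from if_neg hak]
        have h1 : ¬(k = a ∧ k = b) := fun h => hak h.1.symm
        have h2 : ¬(i = a ∧ j = b) := fun h => hai h.1.symm
        simp [h1, h2]
  have final : Matrix.single i j (1 : ℝ) = Matrix.single k k (1 : ℝ)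
      - (2⁻¹ : ℝ) • ((2 : ℝ) • (Matrix.single k k (1 : ℝ)
        - Matrix.single i j (1 : ℝ))) := by
    module
  rw [final, ← key]
  exact Submodule.sub_mem _ (diag_mem_V hn k) (Submodule.smul_mem _ _ hmem)

theorem affineSpan_SO_eq_top (hn : 3 ≤ n) :
    affineSpan ℝ (SpecialOrthogonal n) = ⊤ := by
  rw [AffineSubspace.affineSpan_eq_top_iff_vectorSpan_eq_top_of_nonempty ℝ _ _
    (s := SpecialOrthogonal n) ⟨1, one_mem_SO⟩]
  rw [eq_top_iff, ← (Matrix.stdBasis ℝ (Fin n) (Fin n)).span_eq, Submodule.span_le]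
  rintro - ⟨⟨i, j⟩, rfl⟩
  rw [Matrix.stdBasis_eq_single]
  rcases eq_or_ne i j with rfl | hij
  · exact diag_mem_V hn i
  · exact offdiag_mem_V hn i j hij

end SpanTop3

theorem high_rank_image_so_nonconvex_aux (n m : ℕ) (hn : 3 ≤ n)
    (π : Matrix (Fin n) (Fin n) ℝ →ₗ[ℝ] (Fin m → ℝ))
    (hrank : n * (n - 1) / 2 < Module.finrank ℝ (LinearMap.range π)) :
    ¬ Convex ℝ (π '' SpecialOrthogonal n) := by
  intro hconv
  classical
  set d := n * (n - 1) / 2 with hd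
  set k := d + 1 with hk
  set W := LinearMap.range π with hW
  have hk_le : k ≤ Module.finrank ℝ W := hrank
  let b : Module.Basis (Fin (Module.finrank ℝ W)) ℝ W := Module.finBasis ℝ W
  let σ₀ : W →ₗ[ℝ] (Fin k → ℝ) := LinearMap.pi fun i => b.coord (Fin.castLE hk_le i)
  obtain ⟨W', hW'⟩ := Submodule.exists_isCompl W
  let pr : (Fin m → ℝ) →ₗ[ℝ] W := W.linearProjOfIsCompl W' hW'
  let σ : (Fin m → ℝ) →ₗ[ℝ] (Fin k → ℝ) := σ₀ ∘ₗ pr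
  set φ := σ ∘ₗ π with hφ
  have hsurj : Function.Surjective ⇑φ := by
    intro y
    set w : W := ∑ i : Fin k, y i • b (Fin.castLE hk_le i) with hwdef
    obtain ⟨x, hx⟩ := LinearMap.mem_range.1 w.2
    refine ⟨x, ?_⟩
    show σ (π x) = y
    rw [hx]
    show σ₀ (pr (w : Fin m → ℝ)) = y
    rw [show pr (w : Fin m → ℝ) = w from Submodule.linearProjOfIsCompl_apply_left hW' w]
    funext i
    show b.coord (Fin.castLE hk_le i) w = y i
    rw [hwdef]
    simp only [Module.Basis.coord_apply, map_sum, _root_.map_smul, Module.Basis.repr_self,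
      Finsupp.smul_apply, Finsupp.single_apply, smul_eq_mul]
    rw [Finset.sum_eq_single i]
    · simp
    · intro c _ hc
      rw [if_neg (fun h => hc (Fin.castLE_injective hk_le h)), mul_zero]
    · intro h; exact absurd (Finset.mem_univ i) h
  have him : ⇑σ '' (⇑π '' SpecialOrthogonal n) = ⇑φ '' SpecialOrthogonal n := by
    rw [Set.image_image]; rfl
  have hconv2 : Convex ℝ (⇑φ '' SpecialOrthogonal n) := by
    rw [← him]; exact hconv.linear_image σ
  have hspan : affineSpan ℝ (⇑φ '' SpecialOrthogonal n) = ⊤ := by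
    have := AffineMap.span_eq_top_of_surjective (f := φ.toAffineMap)
      (by rw [LinearMap.coe_toAffineMap]; exact hsurj) (affineSpan_SO_eq_top hn)
    rwa [LinearMap.coe_toAffineMap] at this
  have hint : (interior (⇑φ '' SpecialOrthogonal n)).Nonempty :=
    (hconv2.interior_nonempty_iff_affineSpan_eq_top).2 hspan
  have hdim_top : dimH (⇑φ '' SpecialOrthogonal n) = (k : ENNReal) := by
    rw [Real.dimH_of_nonempty_interior hint, Module.finrank_fintype_fun_eq_card,
      Fintype.card_fin]
  have hle := dimH_image_SO_le φ
  rw [hdim_top] at hle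
  have : k ≤ d := by exact_mod_cast hle
  omega


/-- If `π : ℝ^{n×n} → ℝ^m` is linear of rank greater than `n(n-1)/2` and
`n ≥ 3`, then `π(SO(n))` is not convex. -/
theorem high_rank_image_so_nonconvex (n m : ℕ) (hn : 3 ≤ n)
    (π : Matrix (Fin n) (Fin n) ℝ →ₗ[ℝ] (Fin m → ℝ))
    (hrank : n * (n - 1) / 2 < Module.finrank ℝ (LinearMap.range π)) :
    ¬ Convex ℝ (π '' SpecialOrthogonal n) :=
  high_rank_image_so_nonconvex_aux n m hn π hrank
end

section
/- Let U ∈ O(n) and let R be an a×b submatrix of U with a + b > n. Then ‖R‖_op = 1. -/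
open Matrix

lemma toEL_apply {m p : ℕ} (M : Matrix (Fin m) (Fin p) ℝ)
    (x : EuclideanSpace ℝ (Fin p)) (i : Fin m) :
    Matrix.toEuclideanLin (𝕜 := ℝ) M x i = M.mulVec (fun j => x j) i := rfl

lemma sum_sq_mulVec {n b : ℕ} (A : Matrix (Fin n) (Fin b) ℝ) (h : Aᵀ * A = 1)
    (x : Fin b → ℝ) : ∑ i, (A.mulVec x i) ^ 2 = ∑ j, (x j) ^ 2 := by
  have h1 : A.mulVec x ⬝ᵥ A.mulVec x = x ⬝ᵥ x := by
    rw [Matrix.dotProduct_mulVec, ← Matrix.vecMul_transpose, Matrix.vecMul_vecMul, h]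
    simp
  simpa [dotProduct, pow_two] using h1

lemma norm_toEL {n b : ℕ} (A : Matrix (Fin n) (Fin b) ℝ) (h : Aᵀ * A = 1)
    (x : EuclideanSpace ℝ (Fin b)) : ‖Matrix.toEuclideanLin (𝕜 := ℝ) A x‖ = ‖x‖ := by
  rw [EuclideanSpace.norm_eq, EuclideanSpace.norm_eq]
  congr 1
  simp only [Real.norm_eq_abs, sq_abs, toEL_apply]
  exact sum_sq_mulVec A h _

/-- Any `a × b` submatrix of an orthogonal matrix with `a + b > n` has
operator norm exactly `1`. -/
theorem opNorm_submatrix_of_orthogonal (n a b : ℕ)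
    (U : Matrix (Fin n) (Fin n) ℝ) (hU : Uᵀ * U = 1)
    (r : Fin a → Fin n) (s : Fin b → Fin n)
    (hr : Function.Injective r) (hs : Function.Injective s)
    (hab : n < a + b) :
    opNorm (U.submatrix r s) = 1 := by
  classical
  set A : Matrix (Fin n) (Fin b) ℝ := U.submatrix id s with hAdef
  set P : Matrix (Fin n) (Fin a) ℝ := (1 : Matrix (Fin n) (Fin n) ℝ).submatrix id r with hPdef
  have hAA : Aᵀ * A = 1 := by
    have : Aᵀ = Uᵀ.submatrix s id := rfl
    rw [this, hAdef, ← Matrix.submatrix_mul _ _ _ _ _ Function.bijective_id, hU,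
      Matrix.submatrix_one _ hs]
  have hPP : Pᵀ * P = 1 := by
    have : Pᵀ = (1 : Matrix (Fin n) (Fin n) ℝ)ᵀ.submatrix r id := rfl
    rw [this, hPdef, Matrix.transpose_one,
      ← Matrix.submatrix_mul _ _ _ _ _ Function.bijective_id, one_mul,
      Matrix.submatrix_one _ hr]
  set L := Matrix.toEuclideanLin (𝕜 := ℝ) A with hL
  set LP := Matrix.toEuclideanLin (𝕜 := ℝ) P with hLP
  set T := Matrix.toEuclideanLin (𝕜 := ℝ) (U.submatrix r s) with hT
  -- upper bound pointwise
  have hub : ∀ x : EuclideanSpace ℝ (Fin b), ‖T x‖ ≤ ‖x‖ := by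
    intro x
    rw [EuclideanSpace.norm_eq, EuclideanSpace.norm_eq]
    apply Real.sqrt_le_sqrt
    simp only [Real.norm_eq_abs, sq_abs, toEL_apply]
    have hTj : ∀ j, (U.submatrix r s).mulVec (fun k => x k) j
        = A.mulVec (fun k => x k) (r j) := fun j => rfl
    calc ∑ j, ((U.submatrix r s).mulVec (fun k => x k) j) ^ 2
        = ∑ j, (A.mulVec (fun k => x k) (r j)) ^ 2 := by simp [hTj]
      _ = ∑ i ∈ Finset.univ.image r, (A.mulVec (fun k => x k) i) ^ 2 := by
          rw [Finset.sum_image (fun u _ v _ h => hr h)]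
      _ ≤ ∑ i, (A.mulVec (fun k => x k) i) ^ 2 :=
          Finset.sum_le_sum_of_subset_of_nonneg (Finset.subset_univ _)
            (fun i _ _ => sq_nonneg _)
      _ = ∑ j, (x j) ^ 2 := sum_sq_mulVec A hAA _
  -- find nonzero vector in the intersection
  have hLinj : Function.Injective L := by
    intro u v huv
    have : ‖u - v‖ = 0 := by
      rw [← norm_toEL A hAA (u - v), map_sub, huv, sub_self, norm_zero]
    simpa [sub_eq_zero] using norm_eq_zero.mp this
  have hLPinj : Function.Injective LP := by
    intro u v huv
    have : ‖u - v‖ = 0 := by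
      rw [← norm_toEL P hPP (u - v), map_sub, huv, sub_self, norm_zero]
    simpa [sub_eq_zero] using norm_eq_zero.mp this
  have hfr1 : Module.finrank ℝ (LinearMap.range L) = b := by
    rw [LinearMap.finrank_range_of_inj hLinj, finrank_euclideanSpace_fin]
  have hfr2 : Module.finrank ℝ (LinearMap.range LP) = a := by
    rw [LinearMap.finrank_range_of_inj hLPinj, finrank_euclideanSpace_fin]
  have hsum := Submodule.finrank_sup_add_finrank_inf_eq (LinearMap.range L) (LinearMap.range LP)
  have hle : Module.finrank ℝ ↥(LinearMap.range L ⊔ LinearMap.range LP) ≤ n := by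
    have := Submodule.finrank_le (LinearMap.range L ⊔ LinearMap.range LP)
    rwa [finrank_euclideanSpace_fin] at this
  have hpos : 0 < Module.finrank ℝ ↥(LinearMap.range L ⊓ LinearMap.range LP) := by omega
  have := Module.finrank_pos_iff.mp hpos
  obtain ⟨⟨v, hv⟩, hvne⟩ := exists_ne (0 : ↥(LinearMap.range L ⊓ LinearMap.range LP))
  have hv0 : v ≠ 0 := by
    intro h; apply hvne; ext; simp [h]
  obtain ⟨x, hx⟩ := (Submodule.mem_inf.mp hv).1
  obtain ⟨y, hy⟩ := (Submodule.mem_inf.mp hv).2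
  -- v vanishes off the range of r
  have hvz : ∀ i, i ∉ Set.range r → v i = 0 := by
    intro i hi
    have : v i = P.mulVec (fun j => y j) i := by rw [← hy]; rfl
    rw [this]
    simp only [Matrix.mulVec, dotProduct, hPdef, Matrix.submatrix_apply, id_eq]
    apply Finset.sum_eq_zero
    intro j _
    rw [Matrix.one_apply_ne (show id i ≠ r j from fun h => hi ⟨j, h.symm⟩), zero_mul]
  -- ‖T x‖ = ‖v‖
  have hTx : ∀ j, T x j = v (r j) := by
    intro j
    rw [← hx]
    rfl
  have hnormTx : ‖T x‖ = ‖v‖ := by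
    rw [EuclideanSpace.norm_eq, EuclideanSpace.norm_eq]
    congr 1
    simp only [Real.norm_eq_abs, sq_abs, hTx]
    calc ∑ j, v (r j) ^ 2
        = ∑ i ∈ Finset.univ.image r, v i ^ 2 :=
          (Finset.sum_image (f := fun i => v i ^ 2) (fun u _ w _ h => hr h)).symm
      _ = ∑ i, v i ^ 2 := by
          apply Finset.sum_subset (Finset.subset_univ _)
          intro i _ hi
          rw [hvz i (by simpa using hi)]
          ring
  have hnormx : ‖v‖ = ‖x‖ := by rw [← hx]; exact norm_toEL A hAA x
  have hxne : ‖x‖ ≠ 0 := by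
    rw [← hnormx]; exact norm_ne_zero_iff.mpr hv0
  -- conclude
  rw [opNorm]
  apply le_antisymm
  · exact ContinuousLinearMap.opNorm_le_bound _ zero_le_one (fun z => by
      rw [one_mul]; exact hub z)
  · have hle2 := (LinearMap.toContinuousLinearMap T).le_opNorm x
    have : ‖T x‖ = ‖x‖ := by rw [hnormTx, hnormx]
    rw [show (LinearMap.toContinuousLinearMap T) x = T x from rfl, this] at hle2
    have hxpos : 0 < ‖x‖ := lt_of_le_of_ne (norm_nonneg _) (Ne.symm hxne)
    calc (1:ℝ) = ‖x‖ / ‖x‖ := by rw [div_self hxne]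
      _ ≤ _ := by
          rw [div_le_iff₀ hxpos]
          linarith [hle2]
end

section
/- Let A ∈ ℝ^{n×n} be symmetric positive definite and let Ũ ∈ ℝ^{n×(n−1)} satisfy ŨᵀŨ = A_{2,2}, the bottom-right (n−1)×(n−1) block of A, and suppose the bottom (n−1)×(n−1) submatrix of Ũ is invertible. Then there are exactly two vectors u ∈ ℝ^n such that the matrix U = (u | Ũ) satisfies UᵀU = A, and these two vectors differ in their first coordinate. -/
open Matrix

def appendCol {n : ℕ} (u : Fin (n + 1) → ℝ)
    (Utilde : Matrix (Fin (n + 1)) (Fin n) ℝ) :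
    Matrix (Fin (n + 1)) (Fin (n + 1)) ℝ :=
  Matrix.of fun i j => Fin.cases (u i) (fun k => Utilde i k) j

lemma quad_roots (b c d t : ℝ) (hc : c ≠ 0) (hD : 0 ≤ b^2 - c*d) :
    c*t^2 + 2*b*t + d = 0 ↔
      t = (-b + Real.sqrt (b^2 - c*d))/c ∨ t = (-b - Real.sqrt (b^2 - c*d))/c := by
  have hs : Real.sqrt (b^2 - c*d) ^ 2 = b^2 - c*d := Real.sq_sqrt hD
  constructor
  · intro h
    have hfac : (c*t + b - Real.sqrt (b^2 - c*d)) * (c*t + b + Real.sqrt (b^2 - c*d)) = 0 := by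
      linear_combination c * h - hs
    rcases mul_eq_zero.1 hfac with h1 | h1
    · left; field_simp; linarith
    · right; field_simp; linarith
  · rintro (h | h) <;> subst h <;> field_simp <;> nlinarith [hs]

/-- Let `A ∈ ℝ^{(n+1)×(n+1)}` be symmetric positive definite and let
`Ũ ∈ ℝ^{(n+1)×n}` satisfy `Ũᵀ Ũ = A₂₂` (the bottom-right `n × n` block of `A`),
with the bottom `n × n` submatrix of `Ũ` invertible. Then there are exactly two
vectors `u` such that `U = (u | Ũ)` satisfies `Uᵀ U = A`, and they differ in
their first coordinate. -/
theorem exactly_two_completions (n : ℕ)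
    (A : Matrix (Fin (n + 1)) (Fin (n + 1)) ℝ) (hA : A.PosDef)
    (Utilde : Matrix (Fin (n + 1)) (Fin n) ℝ)
    (hUA : Utildeᵀ * Utilde = A.submatrix Fin.succ Fin.succ)
    (hbot : IsUnit (Utilde.submatrix Fin.succ id).det) :
    ∃ u v : Fin (n + 1) → ℝ, u 0 ≠ v 0 ∧
      {w : Fin (n + 1) → ℝ | (appendCol w Utilde)ᵀ * appendCol w Utilde = A} =
        {u, v} := by
  classical
  set B : Matrix (Fin n) (Fin n) ℝ := Utilde.submatrix Fin.succ id with hBdef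
  have hBT : IsUnit Bᵀ.det := by rwa [Matrix.det_transpose]
  set r : Fin n → ℝ := fun k => Utilde 0 k with hrdef
  set a : Fin n → ℝ := fun k => A (Fin.succ k) 0 with hadef
  have hAsymm : ∀ i j, A i j = A j i := by
    intro i j
    have := congrFun (congrFun hA.1 j) i
    simpa using this
  -- splitting of Utildeᵀ *ᵥ w
  have hsplit : ∀ w : Fin (n+1) → ℝ,
      Utildeᵀ *ᵥ w = w 0 • r + Bᵀ *ᵥ (fun j => w j.succ) := by
    intro w
    funext k
    simp [Matrix.mulVec, dotProduct, Fin.sum_univ_succ, hBdef, hrdef,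
      mul_comm]
  set p : Fin (n+1) → ℝ := Fin.cons 0 ((Bᵀ)⁻¹ *ᵥ a) with hpdef
  set e : Fin (n+1) → ℝ := Fin.cons 1 (-((Bᵀ)⁻¹ *ᵥ r)) with hedef
  have hp0 : p 0 = 0 := rfl
  have he0 : e 0 = 1 := rfl
  have hBTinv : ∀ x : Fin n → ℝ, Bᵀ *ᵥ ((Bᵀ)⁻¹ *ᵥ x) = x := by
    intro x
    rw [Matrix.mulVec_mulVec, Matrix.mul_nonsing_inv _ hBT, Matrix.one_mulVec]
  have hBTinv' : ∀ x : Fin n → ℝ, (Bᵀ)⁻¹ *ᵥ (Bᵀ *ᵥ x) = x := by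
    intro x
    rw [Matrix.mulVec_mulVec, Matrix.nonsing_inv_mul _ hBT, Matrix.one_mulVec]
  have hUp : Utildeᵀ *ᵥ p = a := by
    rw [hsplit]
    simp [hpdef, hBTinv]
  have hUe : Utildeᵀ *ᵥ e = 0 := by
    rw [hsplit]
    have h1 : (fun j => e j.succ) = -((Bᵀ)⁻¹ *ᵥ r) := by
      funext j; simp [hedef]
    rw [h1, Matrix.mulVec_neg, hBTinv]
    simp [hedef]
  have hparam : ∀ w : Fin (n+1) → ℝ, Utildeᵀ *ᵥ w = a ↔ w = p + w 0 • e := by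
    intro w
    constructor
    · intro h
      rw [hsplit] at h
      have h2 : Bᵀ *ᵥ (fun j => w j.succ) = a - w 0 • r := by
        rw [← h]; abel
      have h3 : (fun j => w j.succ) = (Bᵀ)⁻¹ *ᵥ (a - w 0 • r) := by
        rw [← h2, hBTinv']
      funext i
      refine Fin.cases ?_ (fun j => ?_) i
      · simp [hpdef, hedef]
      · have := congrFun h3 j
        simp only [Matrix.mulVec_sub, Matrix.mulVec_smul] at this
        simp [hpdef, hedef, this, sub_eq_add_neg, mul_comm]
    · intro h
      rw [h]
      rw [Matrix.mulVec_add, Matrix.mulVec_smul, hUp, hUe]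
      simp
  -- membership characterization
  have hmem : ∀ w : Fin (n+1) → ℝ,
      (appendCol w Utilde)ᵀ * appendCol w Utilde = A ↔
        (w ⬝ᵥ w = A 0 0 ∧ Utildeᵀ *ᵥ w = a) := by
    intro w
    constructor
    · intro h
      refine ⟨?_, ?_⟩
      · have h0 := congrFun (congrFun h 0) 0
        simpa [appendCol, Matrix.mul_apply, dotProduct] using h0
      · funext k
        have hk := congrFun (congrFun h (Fin.succ k)) 0
        simp only [Matrix.mul_apply, Matrix.transpose_apply, appendCol, Matrix.of_apply,
          Fin.cases_zero, Fin.cases_succ] at hk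
        simpa [Matrix.mulVec, dotProduct, hadef, mul_comm] using hk
    · rintro ⟨h1, h2⟩
      ext i j
      induction i using Fin.cases with
      | zero =>
        induction j using Fin.cases with
        | zero =>
          simpa [appendCol, Matrix.mul_apply, dotProduct] using h1
        | succ j' =>
          have hj := congrFun h2 j'
          simp only [Matrix.mulVec, dotProduct, hadef] at hj
          simp only [Matrix.mul_apply, Matrix.transpose_apply, appendCol, Matrix.of_apply,
            Fin.cases_zero, Fin.cases_succ, hAsymm 0 j'.succ]
          simpa [mul_comm] using hj
      | succ i' =>
        induction j using Fin.cases with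
        | zero =>
          have hi := congrFun h2 i'
          simp only [Matrix.mulVec, dotProduct, hadef] at hi
          simp only [Matrix.mul_apply, Matrix.transpose_apply, appendCol, Matrix.of_apply,
            Fin.cases_zero, Fin.cases_succ]
          simpa [mul_comm] using hi
        | succ j' =>
          have hij := congrFun (congrFun hUA i') j'
          simp only [Matrix.mul_apply, Matrix.transpose_apply, Matrix.submatrix_apply] at hij
          simp only [Matrix.mul_apply, Matrix.transpose_apply, appendCol, Matrix.of_apply,
            Fin.cases_succ]
          exact hij
  -- quadratic value along the line
  have hquadval : ∀ t : ℝ, (p + t • e) ⬝ᵥ (p + t • e) =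
      (e ⬝ᵥ e)*t^2 + 2*(p ⬝ᵥ e)*t + p ⬝ᵥ p := by
    intro t
    simp only [dotProduct_add, add_dotProduct, dotProduct_smul,
      smul_dotProduct, smul_eq_mul, dotProduct_comm e p]
    ring
  have hcpos : 0 < e ⬝ᵥ e := by
    have h1 : e ⬝ᵥ e = 1 + ∑ j : Fin n, e j.succ * e j.succ := by
      simp [dotProduct, Fin.sum_univ_succ, he0]
    have h2 : 0 ≤ ∑ j : Fin n, e j.succ * e j.succ :=
      Finset.sum_nonneg fun j _ => mul_self_nonneg _
    rw [h1]; linarith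
  -- the bottom-right block is positive definite
  set A22 : Matrix (Fin n) (Fin n) ℝ := A.submatrix Fin.succ Fin.succ with hA22def
  have hA22pd : A22.PosDef := by
    refine Matrix.PosDef.of_dotProduct_mulVec_pos (hA.1.submatrix _) fun x hx => ?_
    have hUx : Utilde *ᵥ x ≠ 0 := by
      intro h0
      apply hx
      have hBx : B *ᵥ x = 0 := by
        funext i
        have := congrFun h0 (Fin.succ i)
        simpa [Matrix.mulVec, dotProduct, hBdef] using this
      have := congrArg (fun v => B⁻¹ *ᵥ v) hBx
      simpa [Matrix.mulVec_mulVec, Matrix.nonsing_inv_mul _ hbot, Matrix.one_mulVec] using this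
    have hpos : 0 < (Utilde *ᵥ x) ⬝ᵥ star (Utilde *ᵥ x) :=
      Matrix.dotProduct_self_star_pos_iff.2 hUx
    have hUA' : Utildeᵀ * Utilde = A.submatrix Fin.succ Fin.succ := hUA
    have heq : star x ⬝ᵥ ((A.submatrix Fin.succ Fin.succ) *ᵥ x)
        = (Utilde *ᵥ x) ⬝ᵥ star (Utilde *ᵥ x) := by
      rw [← hUA', ← Matrix.mulVec_mulVec, star_trivial,
        Matrix.dotProduct_mulVec, Matrix.vecMul_transpose, star_trivial,
        dotProduct_comm]
    rw [heq]; exact hpos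
  have hdetA22 : IsUnit A22.det := isUnit_iff_ne_zero.2 (ne_of_gt hA22pd.det_pos)
  set y : Fin n → ℝ := A22⁻¹ *ᵥ a with hydef
  have hA22y : A22 *ᵥ y = a := by
    rw [hydef, Matrix.mulVec_mulVec, Matrix.mul_nonsing_inv _ hdetA22, Matrix.one_mulVec]
  have hUws : Utildeᵀ *ᵥ (Utilde *ᵥ y) = a := by
    rw [Matrix.mulVec_mulVec, hUA]; exact hA22y
  have hws_line : Utilde *ᵥ y = p + (Utilde *ᵥ y) 0 • e := (hparam _).1 hUws
  have hws_sq : (Utilde *ᵥ y) ⬝ᵥ (Utilde *ᵥ y) = a ⬝ᵥ y := by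
    rw [Matrix.dotProduct_mulVec, ← Matrix.mulVec_transpose, hUws]
  -- Schur complement positivity
  set xv : Fin (n+1) → ℝ := Fin.cons 1 (-y) with hxvdef
  have hxv0 : xv ≠ 0 := by
    intro h
    have := congrFun h 0
    simp [hxvdef] at this
  have hAx_succ : ∀ i, (A *ᵥ xv) (Fin.succ i) = 0 := by
    intro i
    have h1 := congrFun hA22y i
    simp only [Matrix.mulVec, dotProduct, hA22def, Matrix.submatrix_apply] at h1
    simp only [Matrix.mulVec, dotProduct, hxvdef, Fin.sum_univ_succ, Fin.cons_zero,
      Fin.cons_succ, Pi.neg_apply, mul_one, mul_neg]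
    rw [Finset.sum_neg_distrib, h1]
    simp [hadef]
  have hxAx : xv ⬝ᵥ (A *ᵥ xv) = A 0 0 - a ⬝ᵥ y := by
    have h0 : xv ⬝ᵥ (A *ᵥ xv) = (A *ᵥ xv) 0 := by
      have hAx' : ∀ i, (A *ᵥ (Fin.cons 1 (-y) : Fin (n+1) → ℝ)) (Fin.succ i) = 0 := hAx_succ
      simp [dotProduct, Fin.sum_univ_succ, hxvdef, hAx_succ, hAx']
    rw [h0]
    simp only [Matrix.mulVec, dotProduct, hxvdef, Fin.sum_univ_succ, Fin.cons_zero,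
      Fin.cons_succ, Pi.neg_apply, mul_one, mul_neg]
    rw [Finset.sum_neg_distrib]
    have hss : ∑ j : Fin n, A 0 j.succ * y j = a ⬝ᵥ y :=
      Finset.sum_congr rfl fun j _ => by rw [hAsymm 0 j.succ]
    rw [hss]
    simp [dotProduct, sub_eq_add_neg]
  have hschur : 0 < A 0 0 - a ⬝ᵥ y := by
    have h := hA.dotProduct_mulVec_pos hxv0
    rw [star_trivial] at h
    rwa [hxAx] at h
  -- the quadratic is negative at t0
  have hq0 : (e ⬝ᵥ e) * ((Utilde *ᵥ y) 0) ^ 2 + 2*(p ⬝ᵥ e)*((Utilde *ᵥ y) 0)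
      + (p ⬝ᵥ p - A 0 0) < 0 := by
    have h1 := hquadval ((Utilde *ᵥ y) 0)
    rw [← hws_line, hws_sq] at h1
    linarith
  have hD : 0 < (p ⬝ᵥ e)^2 - (e ⬝ᵥ e)*(p ⬝ᵥ p - A 0 0) := by
    nlinarith [sq_nonneg ((e ⬝ᵥ e) * ((Utilde *ᵥ y) 0) + p ⬝ᵥ e), hcpos, hq0,
      mul_pos hcpos (show (0:ℝ) < -((e ⬝ᵥ e) * ((Utilde *ᵥ y) 0) ^ 2
        + 2*(p ⬝ᵥ e)*((Utilde *ᵥ y) 0) + (p ⬝ᵥ p - A 0 0)) by linarith)]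
  have hcne : (e ⬝ᵥ e) ≠ 0 := ne_of_gt hcpos
  set sD : ℝ := Real.sqrt ((p ⬝ᵥ e)^2 - (e ⬝ᵥ e)*(p ⬝ᵥ p - A 0 0)) with hsDdef
  have hsDpos : 0 < sD := Real.sqrt_pos.2 hD
  set t1 : ℝ := (-(p ⬝ᵥ e) + sD)/(e ⬝ᵥ e) with ht1def
  set t2 : ℝ := (-(p ⬝ᵥ e) - sD)/(e ⬝ᵥ e) with ht2def
  have ht12 : t1 ≠ t2 := by
    rw [ht1def, ht2def]
    intro h
    rw [div_eq_div_iff hcne hcne] at h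
    nlinarith [hsDpos, hcpos]
  have hroots : ∀ t : ℝ, (e ⬝ᵥ e)*t^2 + 2*(p ⬝ᵥ e)*t + (p ⬝ᵥ p - A 0 0) = 0 ↔
      t = t1 ∨ t = t2 :=
    fun t => quad_roots _ _ _ t hcne hD.le
  refine ⟨p + t1 • e, p + t2 • e, ?_, ?_⟩
  · simpa [hp0, he0] using ht12
  · ext w
    simp only [Set.mem_setOf_eq, Set.mem_insert_iff, Set.mem_singleton_iff]
    rw [hmem w]
    constructor
    · rintro ⟨hq, hlin⟩
      have hw := (hparam w).1 hlin
      have hval : (e ⬝ᵥ e)*(w 0)^2 + 2*(p ⬝ᵥ e)*(w 0) + (p ⬝ᵥ p - A 0 0) = 0 := by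
        have h1 := hquadval (w 0)
        rw [← hw, hq] at h1
        linarith
      rcases (hroots (w 0)).1 hval with h | h
      · left; rw [hw, h]
      · right; rw [hw, h]
    · have key : ∀ t : ℝ, t = t1 ∨ t = t2 →
          ((p + t • e) ⬝ᵥ (p + t • e) = A 0 0 ∧ Utildeᵀ *ᵥ (p + t • e) = a) := by
        intro t ht
        have hval := (hroots t).2 ht
        refine ⟨by rw [hquadval]; linarith, ?_⟩
        rw [Matrix.mulVec_add, Matrix.mulVec_smul, hUp, hUe]
        simp
      rintro (h | h) <;> subst h
      · exact key t1 (Or.inl rfl)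
      · exact key t2 (Or.inr rfl)
end
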